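/- arXiv:1906.08599 — 6 statements merged into one kernel-verified Lean document; each statement's English description precedes it below -/
import Mathlib

section
/- For a tree T rooted at vertex 0 with vertices 0,1,…,m and values a_i (a_0 = 0), the following identity holds: Σ_{i=1}^m (a_i − a_{μ_i}) · (Σ_{j ∈ T_i} a_j) = Σ_{i=1}^m a_i², where μ_i is the parent of i and T_i is the subtree rooted at i (including i). -/
open Finset

open Classical in
/-- For a rooted tree on `{0,1,…,m}` with root `0` given by the parent
map `μ` (every vertex reaches the root by iterating `μ`), and values `a` with
`a 0 = 0`, one has `Σ_{i≠0} (a i − a (μ i)) · (Σ_{j ∈ T_i} a j) = Σ_{i≠0} a i ²`,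
where `T_i = {j : μ^[k] j = i for some k}` is the subtree rooted at `i`. -/
theorem tree_telescoping_identity {m : ℕ}
    (μ : Fin (m + 1) → Fin (m + 1)) (hμ0 : μ 0 = 0)
    (hroot : ∀ i, ∃ k, μ^[k] i = 0)
    (a : Fin (m + 1) → ℝ) (ha0 : a 0 = 0) :
    ∑ i ∈ univ.filter (fun i => i ≠ 0),
        (a i - a (μ i)) * (∑ j ∈ univ.filter (fun j => ∃ k, μ^[k] j = i), a j)
      = ∑ i ∈ univ.filter (fun i => i ≠ 0), a i ^ 2 := by
  have hfix : ∀ n, μ^[n] 0 = 0 := fun n => Function.iterate_fixed hμ0 n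
  have key : ∀ j : Fin (m+1),
      ∑ i ∈ univ.filter (fun i => i ≠ 0 ∧ ∃ k, μ^[k] j = i), (a i - a (μ i)) = a j := by
    intro j
    set K := Nat.find (hroot j) with hK
    have hKspec : μ^[K] j = 0 := Nat.find_spec (hroot j)
    have hset : univ.filter (fun i => i ≠ 0 ∧ ∃ k, μ^[k] j = i)
        = (Finset.range K).image (fun t => μ^[t] j) := by
      ext i
      simp only [mem_filter, mem_univ, true_and, Finset.mem_image, Finset.mem_range]
      constructor
      · rintro ⟨hi0, k, rfl⟩
        refine ⟨k, ?_, rfl⟩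
        by_contra h
        push_neg at h
        have : μ^[k] j = 0 := by
          have h2 : μ^[(k - K) + K] j = 0 := by
            rw [Function.iterate_add_apply, hKspec, hfix]
          rwa [Nat.sub_add_cancel h] at h2
        exact hi0 this
      · rintro ⟨t, ht, rfl⟩
        exact ⟨Nat.find_min (hroot j) ht, t, rfl⟩
    rw [hset, Finset.sum_image ?inj]
    case inj =>
      intro s hs t ht hst
      simp only [Finset.mem_coe, Finset.mem_range] at hs ht hst
      by_contra hne
      wlog h : s < t generalizing s t
      · exact this hst.symm ht hs (Ne.symm hne) (by omega)
      have h0 : μ^[(K - t) + s] j = 0 := by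
        rw [Function.iterate_add_apply, hst, ← Function.iterate_add_apply,
          Nat.sub_add_cancel (le_of_lt ht), hKspec]
      exact absurd h0 (Nat.find_min (hroot j) (by omega))
    have step : ∀ t, a (μ (μ^[t] j)) = a (μ^[t+1] j) := by
      intro t; rw [Function.iterate_succ_apply']
    calc ∑ t ∈ Finset.range K, (a (μ^[t] j) - a (μ (μ^[t] j)))
        = ∑ t ∈ Finset.range K, (a (μ^[t] j) - a (μ^[t+1] j)) := by
          refine Finset.sum_congr rfl fun t _ => ?_
          rw [step]
      _ = a (μ^[0] j) - a (μ^[K] j) := Finset.sum_range_sub' (fun t => a (μ^[t] j)) K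
      _ = a j := by simp [hKspec, ha0]
  calc ∑ i ∈ univ.filter (fun i => i ≠ 0),
        (a i - a (μ i)) * (∑ j ∈ univ.filter (fun j => ∃ k, μ^[k] j = i), a j)
      = ∑ i : Fin (m+1), ∑ j : Fin (m+1),
          (if i ≠ 0 ∧ (∃ k, μ^[k] j = i) then (a i - a (μ i)) * a j else 0) := by
        rw [Finset.sum_filter]
        refine Finset.sum_congr rfl fun i _ => ?_
        by_cases hi : i = 0
        · simp [hi]
        · simp only [hi, Ne, not_false_iff, if_true, true_and]
          rw [Finset.mul_sum, Finset.sum_filter]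
    _ = ∑ j : Fin (m+1), ∑ i : Fin (m+1),
          (if i ≠ 0 ∧ (∃ k, μ^[k] j = i) then (a i - a (μ i)) * a j else 0) :=
        Finset.sum_comm
    _ = ∑ j : Fin (m+1), a j ^ 2 := by
        refine Finset.sum_congr rfl fun j _ => ?_
        calc ∑ i : Fin (m+1),
              (if i ≠ 0 ∧ (∃ k, μ^[k] j = i) then (a i - a (μ i)) * a j else 0)
            = ∑ i ∈ univ.filter (fun i => i ≠ 0 ∧ ∃ k, μ^[k] j = i),
                (a i - a (μ i)) * a j := (Finset.sum_filter _ _).symm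
          _ = (∑ i ∈ univ.filter (fun i => i ≠ 0 ∧ ∃ k, μ^[k] j = i),
                (a i - a (μ i))) * a j := (Finset.sum_mul ..).symm
          _ = a j * a j := by rw [key j]
          _ = a j ^ 2 := (sq (a j)).symm
    _ = ∑ i ∈ univ.filter (fun i => i ≠ 0), a i ^ 2 := by
        rw [Finset.sum_filter]
        refine Finset.sum_congr rfl fun i _ => ?_
        by_cases hi : i = 0 <;> simp [hi, ha0]
end

section
/- Define the allocation n_{iμ_i} = λ s_{iμ_i} Σ_{j∈T_i} a_j on the edges of a shortest-path tree E (and n_e = 0 otherwise), with λ > 0. Then the vector a = (a_1,…,a_m) of shortest-path distances is an eigenvector of the resulting Fisher information matrix F({n_e}) with eigenvalue λ. -/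
open Finset Matrix

open Classical in
/-- The sum of `a` over the subtree rooted at `i` (parent map `μ`). -/
noncomputable def subtreeSum {m : ℕ} (μ : Fin (m + 1) → Fin (m + 1))
    (a : Fin (m + 1) → ℝ) (i : Fin (m + 1)) : ℝ :=
  ∑ j ∈ univ.filter (fun j => ∃ k, μ^[k] j = i), a j

section Aux
variable {m : ℕ} {μ : Fin (m + 1) → Fin (m + 1)}

lemma zero_fix (hμ0 : μ 0 = 0) {x : Fin (m + 1)} {k t : ℕ}
    (h : μ^[k] x = 0) (ht : k ≤ t) : μ^[t] x = 0 := by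
  obtain ⟨d, rfl⟩ := Nat.exists_eq_add_of_le ht
  clear ht
  induction d with
  | zero => simpa using h
  | succ d ih =>
      rw [← Nat.add_assoc, Function.iterate_succ_apply', ih, hμ0]

lemma no_period (hμ0 : μ 0 = 0) (hroot : ∀ i, ∃ k, μ^[k] i = 0)
    {i : Fin (m + 1)} (hi : i ≠ 0) {p : ℕ} (hp : 0 < p) (h : μ^[p] i = i) : False := by
  obtain ⟨k, hk⟩ := hroot i
  have hnp : ∀ nn : ℕ, μ^[nn * p] i = i := by
    intro nn
    induction nn with
    | zero => simp
    | succ nn ih => rw [Nat.succ_mul, Function.iterate_add_apply, h, ih]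
  have h2 : μ^[k * p] i = 0 := zero_fix hμ0 hk (Nat.le_mul_of_pos_right k hp)
  exact hi ((hnp k).symm.trans h2)

lemma wit_le (hμ0 : μ 0 = 0) (hroot : ∀ i, ∃ k, μ^[k] i = 0)
    {i x : Fin (m + 1)} (hi : i ≠ 0) {k1 k2 : ℕ} (hle : k1 ≤ k2)
    (h1 : μ^[k1] x = i) (h2 : μ^[k2] x = i) : k1 = k2 := by
  by_contra hne
  have hp : 0 < k2 - k1 := by omega
  apply no_period hμ0 hroot hi hp
  have : μ^[k2 - k1] (μ^[k1] x) = μ^[k2] x := by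
    rw [← Function.iterate_add_apply]; congr 1; omega
  rw [h1] at this; rw [this, h2]

lemma unique_witness (hμ0 : μ 0 = 0) (hroot : ∀ i, ∃ k, μ^[k] i = 0)
    {i x : Fin (m + 1)} (hi : i ≠ 0) {k1 k2 : ℕ}
    (h1 : μ^[k1] x = i) (h2 : μ^[k2] x = i) : k1 = k2 := by
  rcases le_total k1 k2 with h | h
  · exact wit_le hμ0 hroot hi h h1 h2
  · exact (wit_le hμ0 hroot hi h h2 h1).symm

open Classical in
lemma subtreeSum_eq (hμ0 : μ 0 = 0) (hroot : ∀ i, ∃ k, μ^[k] i = 0)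
    (a : Fin (m + 1) → ℝ) {i : Fin (m + 1)} (hi : i ≠ 0) :
    subtreeSum μ a i = a i +
      ∑ c ∈ univ.filter (fun c => μ c = i ∧ c ≠ i), subtreeSum μ a c := by
  classical
  have hself : μ i ≠ i := fun h =>
    no_period hμ0 hroot hi Nat.one_pos (by simpa using h)
  have hset : (univ.filter (fun j => ∃ k, μ^[k] j = i) : Finset (Fin (m+1))) =
      insert i ((univ.filter (fun c => μ c = i ∧ c ≠ i)).biUnion
        (fun c => univ.filter (fun j => ∃ k, μ^[k] j = c))) := by
    ext x
    simp only [mem_filter, mem_univ, true_and, mem_insert, mem_biUnion]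
    constructor
    · rintro ⟨k, hk⟩
      rcases Nat.eq_zero_or_pos k with rfl | hkpos
      · left; exact hk
      · right
        obtain ⟨k', rfl⟩ := Nat.exists_eq_succ_of_ne_zero hkpos.ne'
        have hstep : μ (μ^[k'] x) = i := by
          rw [← Function.iterate_succ_apply' μ k' x]; exact hk
        refine ⟨μ^[k'] x, ⟨hstep, ?_⟩, k', rfl⟩
        intro hc
        have hk1 : μ^[k' + 1] x = i := by rw [Function.iterate_succ_apply', hstep]
        have := unique_witness hμ0 hroot hi hc hk1
        omega
    · rintro (rfl | ⟨c, ⟨hc, hci⟩, k, hk⟩)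
      · exact ⟨0, rfl⟩
      · exact ⟨k + 1, by rw [Function.iterate_succ_apply', hk, hc]⟩
  have hnotmem : i ∉ (univ.filter (fun c => μ c = i ∧ c ≠ i)).biUnion
      (fun c => univ.filter (fun j => ∃ k, μ^[k] j = c)) := by
    simp only [mem_biUnion, mem_filter, mem_univ, true_and, not_exists]
    rintro c ⟨hc, k, hk⟩
    exact no_period hμ0 hroot hi (Nat.succ_pos k)
      (by rw [Function.iterate_succ_apply', hk, hc.1])
  have hdisj : (↑(univ.filter (fun c => μ c = i ∧ c ≠ i)) : Set (Fin (m+1))).PairwiseDisjoint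
      (fun c => univ.filter (fun j => ∃ k, μ^[k] j = c)) := by
    intro c1 h1 c2 h2 hne
    simp only [coe_filter, Set.mem_setOf_eq, mem_univ, true_and] at h1 h2
    refine Finset.disjoint_left.mpr fun x hx1 hx2 => ?_
    simp only [mem_filter, mem_univ, true_and] at hx1 hx2
    obtain ⟨k1, hk1⟩ := hx1
    obtain ⟨k2, hk2⟩ := hx2
    have e1 : μ^[k1 + 1] x = i := by rw [Function.iterate_succ_apply', hk1, h1.1]
    have e2 : μ^[k2 + 1] x = i := by rw [Function.iterate_succ_apply', hk2, h2.1]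
    have hk12 : k1 = k2 := by have := unique_witness hμ0 hroot hi e1 e2; omega
    exact hne (by rw [← hk1, ← hk2, hk12])
  rw [subtreeSum, hset, Finset.sum_insert hnotmem, Finset.sum_biUnion hdisj]
  rfl
end Aux

/-- Define the allocation `n_{i,μ i} = λ · s_{i,μ i} · Σ_{j∈T_i} a j`
on the edges of a shortest-path tree (and `n_e = 0` otherwise).  Then the vector
`(a 1, …, a m)` of shortest-path distances is an eigenvector of the resulting
Fisher information matrix `F({n_e})` with eigenvalue `λ`. -/
theorem tree_allocation_eigenvector {m : ℕ}
    (s : Fin (m + 1) → Fin (m + 1) → ℝ)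
    (hs : ∀ i j, i ≠ j → 0 < s i j) (hs_symm : ∀ i j, s i j = s j i)
    (μ : Fin (m + 1) → Fin (m + 1)) (hμ0 : μ 0 = 0)
    (hroot : ∀ i, ∃ k, μ^[k] i = 0)
    (a : Fin (m + 1) → ℝ) (ha0 : a 0 = 0)
    (ha : ∀ i, i ≠ 0 → a i = a (μ i) + s (μ i) i)
    (lam : ℝ) (hlam : 0 < lam)
    (n : Fin (m + 1) → Fin (m + 1) → ℝ)
    (hn : n = fun i j =>
      if i ≠ 0 ∧ μ i = j then lam * s i j * subtreeSum μ a i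
      else if j ≠ 0 ∧ μ j = i then lam * s i j * subtreeSum μ a j
      else 0)
    (F : Matrix (Fin m) (Fin m) ℝ)
    (hF : F = Matrix.of fun i j =>
      if i = j then ∑ k ∈ univ.filter (fun k => k ≠ i.succ), n i.succ k / s i.succ k ^ 2
      else -(n i.succ j.succ / s i.succ j.succ ^ 2)) :
    F.mulVec (fun i => a i.succ) = lam • fun i => a i.succ := by
  classical
  funext i
  set i' : Fin (m + 1) := i.succ with hi'def
  have hi'0 : i' ≠ 0 := Fin.succ_ne_zero i
  set S : Fin (m + 1) → ℝ := subtreeSum μ a with hSdef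
  have hμself : μ i' ≠ i' := fun h =>
    no_period hμ0 hroot hi'0 Nat.one_pos (by simpa using h)
  have hμ2 : μ (μ i') ≠ i' := by
    intro h
    refine no_period hμ0 hroot hi'0 (by norm_num : (0:ℕ) < 2) ?_
    show μ^[1 + 1] i' = i'
    rw [Function.iterate_add_apply]
    simpa using h
  -- basic values of n on row i'
  have hn_par : n i' (μ i') = lam * s i' (μ i') * S i' := by
    rw [hn]; simp [hi'0]
  have hn_child : ∀ k, μ k = i' → n i' k = lam * s i' k * S k := by
    intro k hk
    have hk0 : k ≠ 0 := by
      intro h; rw [h, hμ0] at hk; exact hi'0 hk.symm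
    have hkp : μ i' ≠ k := fun h => hμ2 (by rw [h, hk])
    rw [hn]
    simp only [ne_eq]
    rw [if_neg (by tauto), if_pos ⟨hk0, hk⟩]
  have hn_zero : ∀ k, μ i' ≠ k → μ k ≠ i' → n i' k = 0 := by
    intro k h1 h2
    rw [hn]
    simp only [ne_eq]
    rw [if_neg (by tauto), if_neg (by tauto)]
  have hn_diag : n i' i' = 0 := hn_zero i' hμself hμself
  set c : Fin (m + 1) → ℝ := fun k => n i' k / s i' k ^ 2 with hcdef
  have hc_diag : c i' = 0 := by rw [hcdef]; simp [hn_diag]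
  set g : Fin (m + 1) → ℝ := fun k => c k * (a i' - a k) with hgdef
  have hg_diag : g i' = 0 := by rw [hgdef]; simp [hc_diag]
  -- Step 1: the row of F ⬝ a equals ∑ k, g k
  have step1 : F.mulVec (fun j => a j.succ) i = ∑ k : Fin (m + 1), g k := by
    have hmv : F.mulVec (fun j => a j.succ) i = ∑ j : Fin m, F i j * a j.succ := rfl
    have hFd : F i i = ∑ k ∈ univ.erase i', c k := by
      rw [hF, Matrix.of_apply, if_pos rfl, Finset.filter_ne']
    have hFo : ∀ j : Fin m, j ≠ i → F i j = -(c j.succ) := by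
      intro j hj
      rw [hF, Matrix.of_apply, if_neg (fun h => hj h.symm)]
    rw [hmv, ← Finset.add_sum_erase _ _ (mem_univ i), hFd]
    have hrest : ∑ j ∈ univ.erase i, F i j * a j.succ
        = -∑ j : Fin m, c j.succ * a j.succ := by
      have e1 : ∑ j ∈ univ.erase i, F i j * a j.succ
          = ∑ j ∈ univ.erase i, -(c j.succ * a j.succ) :=
        Finset.sum_congr rfl fun j hj => by
          rw [hFo j (Finset.mem_erase.mp hj).1, neg_mul]
      have e2 : ∑ j ∈ univ.erase i, -(c j.succ * a j.succ)
          = ∑ j : Fin m, -(c j.succ * a j.succ) :=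
        Finset.sum_erase _ (by simp [hc_diag]; exact Or.inl hc_diag)
      rw [e1, e2, Finset.sum_neg_distrib]
    rw [hrest]
    have hsum1 : (∑ k ∈ univ.erase i', c k) = ∑ k : Fin (m + 1), c k :=
      Finset.sum_erase _ hc_diag
    have hsum2 : ∑ k : Fin (m + 1), c k * a k = ∑ j : Fin m, c j.succ * a j.succ := by
      rw [Fin.sum_univ_succ]
      simp [ha0]
    have : ∑ k : Fin (m + 1), g k
        = (∑ k : Fin (m + 1), c k) * a i' - ∑ k : Fin (m + 1), c k * a k := by
      rw [Finset.sum_mul, ← Finset.sum_sub_distrib]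
      exact Finset.sum_congr rfl fun k _ => by rw [hgdef]; ring
    rw [this, hsum1, hsum2]
    ring
  -- Step 2: ∑ k, g k = lam * a i'
  have hspar : s i' (μ i') ≠ 0 := ne_of_gt (hs i' (μ i') (Ne.symm hμself))
  have hgpar : g (μ i') = lam * S i' := by
    have haeq : a i' - a (μ i') = s i' (μ i') := by
      rw [ha i' hi'0, hs_symm (μ i') i']; ring
    rw [hgdef]
    simp only []
    rw [hcdef]
    simp only []
    rw [hn_par, haeq]
    field_simp
  have hchild_eq : (univ.erase (μ i')).filter (fun k => μ k = i')
      = univ.filter (fun cc => μ cc = i' ∧ cc ≠ i') := by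
    ext k
    simp only [mem_filter, mem_erase, mem_univ, true_and, and_true]
    constructor
    · rintro ⟨hk1, hk2⟩
      exact ⟨hk2, fun h => hμself (by rw [h] at hk2; exact hk2)⟩
    · rintro ⟨hk1, hk2⟩
      exact ⟨fun h => hμ2 (by rw [← h, hk1]), hk1⟩
  have hgchild : ∀ k ∈ univ.erase (μ i'), g k = if μ k = i' then -(lam * S k) else 0 := by
    intro k hk
    have hkne : k ≠ μ i' := (Finset.mem_erase.mp hk).1
    by_cases hki : μ k = i'
    · rw [if_pos hki]
      have hki' : k ≠ i' := fun h => hμself (by rw [← h] at hki ⊢; exact hki)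
      have hk0 : k ≠ 0 := by
        intro h; rw [h, hμ0] at hki; exact hi'0 hki.symm
      have hsk : s i' k ≠ 0 := ne_of_gt (hs i' k (Ne.symm hki'))
      have hak : a k = a i' + s i' k := by
        rw [ha k hk0, hki, hs_symm i' k]
      rw [hgdef]
      simp only []
      rw [hcdef]
      simp only []
      rw [hn_child k hki, hak]
      field_simp
      ring
    · rw [if_neg hki, hgdef]
      simp only []
      rw [hcdef]
      simp only []
      rw [hn_zero k (fun h => hkne h.symm) hki]
      simp
  have hpart : S i' = a i' + ∑ cc ∈ univ.filter (fun cc => μ cc = i' ∧ cc ≠ i'), S cc := by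
    rw [hSdef]; exact subtreeSum_eq hμ0 hroot a hi'0
  have step2 : ∑ k : Fin (m + 1), g k = lam * a i' := by
    rw [← Finset.add_sum_erase _ _ (mem_univ (μ i')), hgpar,
      Finset.sum_congr rfl hgchild, ← Finset.sum_filter, hchild_eq, hpart,
      Finset.sum_neg_distrib, ← Finset.mul_sum]
    ring
  rw [step1, step2]
  simp
  exact Or.inl rfl
end

section
/- With the tree allocation n_{iμ_i} = λ s_{iμ_i} Σ_{j∈T_i} a_j, the constraint Σ_e n_e = N forces λ = N / (Σ_{i=1}^m a_i²). -/
open Finset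

open Classical in
lemma ancestor_sum {m : ℕ} (μ : Fin (m + 1) → Fin (m + 1)) (hμ0 : μ 0 = 0)
    (hroot : ∀ i, ∃ k, μ^[k] i = 0)
    (a : Fin (m + 1) → ℝ) (ha0 : a 0 = 0) (j : Fin (m + 1)) :
    ∑ i ∈ univ.filter (fun i => i ≠ 0 ∧ ∃ k, μ^[k] j = i), (a i - a (μ i)) = a j := by
  set d := Nat.find (hroot j) with hd
  have hdzero : μ^[d] j = 0 := Nat.find_spec (hroot j)
  have hlt : ∀ k < d, μ^[k] j ≠ 0 := fun k hk => Nat.find_min (hroot j) hk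
  have hzero : ∀ k, d ≤ k → μ^[k] j = 0 := by
    intro k hk
    have h1 : μ^[k - d + d] j = μ^[k] j := by congr 1; omega
    rw [← h1, Function.iterate_add_apply, hdzero]
    induction (k - d) with
    | zero => rfl
    | succ n ih => rw [Function.iterate_succ_apply', ih, hμ0]
  have hinj : Set.InjOn (fun k => μ^[k] j) (Finset.range d) := by
    intro k hk l hl h
    simp only [Finset.coe_range, Set.mem_Iio] at hk hl
    simp only at h
    by_contra hne
    rcases Nat.lt_or_ge k l with hkl | hkl
    · have : μ^[(d - l) + k] j = 0 := by
        rw [Function.iterate_add_apply, h, ← Function.iterate_add_apply]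
        have : d - l + l = d := by omega
        rw [this, hdzero]
      exact hlt _ (by omega) this
    · have hlk : l < k := by omega
      have : μ^[(d - k) + l] j = 0 := by
        rw [Function.iterate_add_apply, ← h, ← Function.iterate_add_apply]
        have : d - k + k = d := by omega
        rw [this, hdzero]
      exact hlt _ (by omega) this
  have himg : univ.filter (fun i => i ≠ 0 ∧ ∃ k, μ^[k] j = i)
      = (Finset.range d).image (fun k => μ^[k] j) := by
    ext i
    simp only [Finset.mem_filter, Finset.mem_univ, true_and, Finset.mem_image,
      Finset.mem_range]
    constructor
    · rintro ⟨hi0, k, rfl⟩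
      refine ⟨k, ?_, rfl⟩
      by_contra hk
      exact hi0 (hzero k (by omega))
    · rintro ⟨k, hk, rfl⟩
      exact ⟨hlt k hk, k, rfl⟩
  rw [himg, Finset.sum_image (fun x hx y hy h => hinj (by simpa using hx) (by simpa using hy) h)]
  have : ∀ k, a (μ (μ^[k] j)) = a (μ^[k + 1] j) := by
    intro k; rw [Function.iterate_succ_apply']
  simp only [this]
  rw [Finset.sum_range_sub' (fun k => a (μ^[k] j))]
  simp [hdzero, ha0]

/-- With the tree allocation `n_{i,μ i} = λ · s_{i,μ i} · Σ_{j∈T_i} a j`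
on a shortest-path tree, where `s_{i,μ i} = a i − a (μ i)`, the constraint
`Σ_e n_e = N` forces `λ = N / (Σ_{i=1}^m a i ²)`. -/
theorem tree_allocation_lambda {m : ℕ}
    (μ : Fin (m + 1) → Fin (m + 1)) (hμ0 : μ 0 = 0)
    (hroot : ∀ i, ∃ k, μ^[k] i = 0)
    (a : Fin (m + 1) → ℝ) (ha0 : a 0 = 0)
    (lam N : ℝ)
    (hA : ∑ i ∈ univ.filter (fun i => i ≠ 0), a i ^ 2 ≠ 0)
    (hN : ∑ i ∈ univ.filter (fun i => i ≠ 0),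
        lam * (a i - a (μ i)) * subtreeSum μ a i = N) :
    lam = N / ∑ i ∈ univ.filter (fun i => i ≠ 0), a i ^ 2 := by
  classical
  have key : ∑ i ∈ univ.filter (fun i => i ≠ 0),
      (a i - a (μ i)) * subtreeSum μ a i
      = ∑ i ∈ univ.filter (fun i => i ≠ 0), a i ^ 2 := by
    have h1 : ∑ i ∈ univ.filter (fun i => i ≠ 0),
        (a i - a (μ i)) * subtreeSum μ a i
        = ∑ j : Fin (m + 1), (∑ i ∈ univ.filter (fun i => i ≠ 0 ∧ ∃ k, μ^[k] j = i),
            (a i - a (μ i))) * a j := by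
      unfold subtreeSum
      simp only [Finset.mul_sum, Finset.sum_mul, Finset.sum_filter]
      rw [Finset.sum_comm]
      refine Finset.sum_congr rfl fun j _ => ?_
      by_cases h0 : j = 0
      · simp [h0]
      · simp only [h0, ne_eq, not_false_eq_true, if_true, true_and]
        refine Finset.sum_congr rfl fun i _ => ?_
        by_cases hk : ∃ k, μ^[k] i = j <;> simp [hk]
    rw [h1]
    have h2 : ∀ j : Fin (m + 1),
        (∑ i ∈ univ.filter (fun i => i ≠ 0 ∧ ∃ k, μ^[k] j = i), (a i - a (μ i))) * a j
        = a j ^ 2 := by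
      intro j
      rw [ancestor_sum μ hμ0 hroot a ha0 j]; ring
    simp only [h2]
    refine (Finset.sum_filter_of_ne fun x _ hx => ?_).symm
    intro h0
    exact hx (by rw [h0, ha0]; ring)
  have hN' : lam * ∑ i ∈ univ.filter (fun i => i ≠ 0), a i ^ 2 = N := by
    rw [← key, Finset.mul_sum, ← hN]
    congr 1; ext i; ring
  field_simp [← hN']
  convert hN'
end

section
/- The E-optimal theorem: for a difference network with positive fluctuations s_e, the spectral norm ‖C({n_e})‖₂ = ‖F({n_e})^{-1}‖₂, minimized over allocations n_e ≥ 0 with Σ_e n_e = N, attains its minimum value (Σ_{i=1}^m a_i²)/N at the allocation n_{iμ_i} = N s_{iμ_i} (Σ_{j∈T_i} a_j)/(Σ_i a_i²) supported on a shortest-path tree, where a_i is the shortest-path distance from vertex 0 to i. -/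
open Finset Matrix

/-- A feasible allocation of a total measurement budget `N` to the edges of the
complete graph on `{0,…,m}`: symmetric, nonnegative, zero on the diagonal, and
summing to `N` over unordered pairs. -/
def Feasible {m : ℕ} (N : ℝ) (n : Fin (m + 1) → Fin (m + 1) → ℝ) : Prop :=
  (∀ i j, 0 ≤ n i j) ∧ (∀ i j, n i j = n j i) ∧ (∀ i, n i i = 0) ∧
    (∑ i, ∑ j ∈ univ.filter (fun j => i < j), n i j) = N

/-- The Fisher information matrix of a difference network with fluctuations `s`
and allocation `n` (vertex `0` is the reference). -/
noncomputable def fisherMat {m : ℕ} (s n : Fin (m + 1) → Fin (m + 1) → ℝ) :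
    Matrix (Fin m) (Fin m) ℝ :=
  Matrix.of fun i j =>
    if i = j then ∑ k ∈ univ.filter (fun k => k ≠ i.succ), n i.succ k / s i.succ k ^ 2
    else -(n i.succ j.succ / s i.succ j.succ ^ 2)

section AuxLemmas
set_option linter.unusedSectionVars false
set_option maxHeartbeats 1000000

variable {m : ℕ} (μ : Fin (m + 1) → Fin (m + 1))
variable (hμ0 : μ 0 = 0) (hroot : ∀ i, ∃ k, μ^[k] i = 0)

include hμ0 in
lemma iter_root' (k : ℕ) : μ^[k] 0 = 0 := by
  induction k with
  | zero => rfl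
  | succ k ih => rw [Function.iterate_succ_apply, hμ0, ih]

include hμ0 hroot

lemma iter_eq_zero_of_ge' (j : Fin (m + 1)) {k : ℕ} (hk : Nat.find (hroot j) ≤ k) :
    μ^[k] j = 0 := by
  rw [← Nat.sub_add_cancel hk, Function.iterate_add_apply, Nat.find_spec (hroot j),
    iter_root' μ hμ0]

lemma path_inj' (j : Fin (m + 1)) {t u : ℕ} (ht : t ≤ Nat.find (hroot j))
    (hu : u ≤ Nat.find (hroot j)) (h : μ^[t] j = μ^[u] j) : t = u := by
  rcases lt_trichotomy t u with h' | h' | h'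
  · exfalso
    have h2 : μ^[Nat.find (hroot j) - u + t] j = 0 := by
      rw [Function.iterate_add_apply, h, ← Function.iterate_add_apply,
        Nat.sub_add_cancel hu, Nat.find_spec (hroot j)]
    exact Nat.find_min (hroot j) (by omega) h2
  · exact h'
  · exfalso
    have h2 : μ^[Nat.find (hroot j) - t + u] j = 0 := by
      rw [Function.iterate_add_apply, ← h, ← Function.iterate_add_apply,
        Nat.sub_add_cancel ht, Nat.find_spec (hroot j)]
    exact Nat.find_min (hroot j) (by omega) h2

lemma no_cycle' {i : Fin (m + 1)} {c : ℕ} (hc : 0 < c) (h : μ^[c] i = i) : i = 0 := by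
  have key : ∀ n : ℕ, μ^[n * c] i = i := by
    intro n
    induction n with
    | zero => simp
    | succ n ih => rw [Nat.succ_mul, Function.iterate_add_apply, h, ih]
  have h1 := key (Nat.find (hroot i))
  have h2 : μ^[Nat.find (hroot i) * c] i = 0 :=
    iter_eq_zero_of_ge' μ hμ0 hroot i (Nat.le_mul_of_pos_right _ hc)
  rw [h1] at h2; exact h2

lemma parent_ne' (i : Fin (m + 1)) (hi : i ≠ 0) : μ i ≠ i := fun h =>
  hi (no_cycle' μ hμ0 hroot Nat.one_pos (h : μ^[1] i = i))

open Classical in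
lemma anc_filter_eq (j : Fin (m + 1)) :
    univ.filter (fun i => i ≠ 0 ∧ ∃ k, μ^[k] j = i)
      = (Finset.range (Nat.find (hroot j))).image (fun t => μ^[t] j) := by
  ext i
  simp only [mem_filter, mem_univ, true_and, Finset.mem_image, Finset.mem_range]
  constructor
  · rintro ⟨hi0, k, rfl⟩
    refine ⟨k, ?_, rfl⟩
    by_contra hk
    exact hi0 (iter_eq_zero_of_ge' μ hμ0 hroot j (by omega))
  · rintro ⟨t, ht, rfl⟩
    exact ⟨Nat.find_min (hroot j) ht, t, rfl⟩

open Classical in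
lemma telescope' (j : Fin (m + 1)) (g : Fin (m + 1) → ℝ) :
    ∑ i ∈ univ.filter (fun i => i ≠ 0 ∧ ∃ k, μ^[k] j = i), (g i - g (μ i))
      = g j - g 0 := by
  rw [anc_filter_eq μ hμ0 hroot j, Finset.sum_image]
  · have : ∀ t ∈ Finset.range (Nat.find (hroot j)),
        g (μ^[t] j) - g (μ (μ^[t] j)) = g (μ^[t] j) - g (μ^[t+1] j) := by
      intro t _
      rw [← Function.iterate_succ_apply' μ t j]
    rw [Finset.sum_congr rfl this, Finset.sum_range_sub' (fun t => g (μ^[t] j)),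
      Nat.find_spec (hroot j)]
    rfl
  · intro t ht u hu h
    exact path_inj' μ hμ0 hroot j (le_of_lt (Finset.mem_range.mp ht))
      (le_of_lt (Finset.mem_range.mp hu)) h

omit hμ0 hroot

open Classical in
lemma sum_swap_anc (c b : Fin (m + 1) → ℝ) :
    ∑ i ∈ univ.filter (fun i => i ≠ 0), c i * ∑ j ∈ univ.filter (fun j => ∃ k, μ^[k] j = i), b j
      = ∑ j, b j * ∑ i ∈ univ.filter (fun i => i ≠ 0 ∧ ∃ k, μ^[k] j = i), c i := by
  have L : ∑ i ∈ univ.filter (fun i => i ≠ 0), c i *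
        ∑ j ∈ univ.filter (fun j => ∃ k, μ^[k] j = i), b j
      = ∑ i, ∑ j, (if i ≠ 0 ∧ (∃ k, μ^[k] j = i) then c i * b j else 0) := by
    rw [Finset.sum_filter]
    refine Finset.sum_congr rfl fun i _ => ?_
    by_cases h1 : i ≠ 0
    · rw [if_pos h1, Finset.mul_sum, Finset.sum_filter]
      refine Finset.sum_congr rfl fun j _ => ?_
      by_cases h2 : ∃ k, μ^[k] j = i <;> simp [h1, h2]
    · rw [if_neg h1]
      symm
      refine Finset.sum_eq_zero fun j _ => by simp [h1]
  have R : ∀ j, b j * ∑ i ∈ univ.filter (fun i => i ≠ 0 ∧ ∃ k, μ^[k] j = i), c i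
      = ∑ i, (if i ≠ 0 ∧ (∃ k, μ^[k] j = i) then c i * b j else 0) := by
    intro j
    rw [Finset.mul_sum, Finset.sum_filter]
    refine Finset.sum_congr rfl fun i _ => ?_
    by_cases h : i ≠ 0 ∧ (∃ k, μ^[k] j = i) <;> simp [h, mul_comm]
  rw [L, Finset.sum_comm]
  exact Finset.sum_congr rfl fun j _ => (R j).symm

include hμ0 hroot

open Classical in
lemma child_decomp {p : Fin (m + 1)} (hp : p ≠ 0) (j : Fin (m + 1)) :
    (if ∃ k, μ^[k] j = p then (1:ℝ) else 0)
      = (if j = p then 1 else 0)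
        + ∑ c ∈ univ.filter (fun c => c ≠ 0 ∧ μ c = p),
            (if ∃ k, μ^[k] j = c then (1:ℝ) else 0) := by
  have hlt : ∀ {c : Fin (m+1)} {k : ℕ}, c ≠ 0 → μ^[k] j = c → k < Nat.find (hroot j) := by
    intro c k hc hk
    by_contra h
    exact hc (hk ▸ iter_eq_zero_of_ge' μ hμ0 hroot j (by omega))
  by_cases hP : ∃ k, μ^[k] j = p
  · obtain ⟨k, hk⟩ := hP
    have hkr : k < Nat.find (hroot j) := hlt hp hk
    by_cases hjp : j = p
    · rw [if_pos ⟨k, hk⟩, if_pos hjp]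
      have : ∑ c ∈ univ.filter (fun c => c ≠ 0 ∧ μ c = p),
          (if ∃ k, μ^[k] j = c then (1:ℝ) else 0) = 0 := by
        refine Finset.sum_eq_zero fun c hc => ?_
        rw [Finset.mem_filter] at hc
        rw [if_neg]
        rintro ⟨k', hk'⟩
        have hk'r : k' < Nat.find (hroot j) := hlt hc.2.1 hk'
        have : μ^[k' + 1] j = μ^[0] j := by
          rw [Function.iterate_succ_apply', hk', hc.2.2, ← hjp]; rfl
        have := path_inj' μ hμ0 hroot j (by omega) (by omega) this
        omega
      rw [this, add_zero]
    · have hk0 : k ≠ 0 := by rintro rfl; exact hjp hk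
      set c₀ := μ^[k - 1] j with hc₀
      have hμc₀ : μ c₀ = p := by
        rw [hc₀, ← Function.iterate_succ_apply' μ (k-1) j]
        have h' : (k - 1).succ = k := by omega
        rw [h', hk]
      have hc₀0 : c₀ ≠ 0 := Nat.find_min (hroot j) (by omega)
      rw [if_pos ⟨k, hk⟩, if_neg hjp, zero_add]
      rw [Finset.sum_eq_single_of_mem c₀
        (Finset.mem_filter.mpr ⟨Finset.mem_univ _, hc₀0, hμc₀⟩)]
      · rw [if_pos ⟨k - 1, rfl⟩]
      · intro c hc hne
        rw [Finset.mem_filter] at hc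
        rw [if_neg]
        rintro ⟨k', hk'⟩
        have hk'r : k' < Nat.find (hroot j) := hlt hc.2.1 hk'
        have : μ^[k' + 1] j = μ^[k] j := by
          rw [Function.iterate_succ_apply', hk', hc.2.2, hk]
        have := path_inj' μ hμ0 hroot j (by omega) (by omega) this
        apply hne
        rw [← hk', hc₀]
        congr 1
        omega
  · have hjp : j ≠ p := fun h => hP ⟨0, h⟩
    rw [if_neg hP, if_neg hjp, zero_add]
    symm
    refine Finset.sum_eq_zero fun c hc => ?_
    rw [Finset.mem_filter] at hc
    rw [if_neg]
    rintro ⟨k', hk'⟩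
    exact hP ⟨k' + 1, by rw [Function.iterate_succ_apply', hk', hc.2.2]⟩

variable (s : Fin (m + 1) → Fin (m + 1) → ℝ) (hs : ∀ i j, i ≠ j → 0 < s i j)
variable (a : Fin (m + 1) → ℝ) (ha0 : a 0 = 0)
variable (ha_edge : ∀ i, i ≠ 0 → a i = a (μ i) + s (μ i) i)

lemma rank_parent_lt (i : Fin (m + 1)) (hi : i ≠ 0) :
    Nat.find (hroot (μ i)) < Nat.find (hroot i) := by
  have h1 : Nat.find (hroot i) ≠ 0 := by
    intro h
    exact hi (by simpa [h] using Nat.find_spec (hroot i))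
  have h2 : μ^[Nat.find (hroot i) - 1] (μ i) = 0 := by
    rw [← Function.iterate_succ_apply]
    have : (Nat.find (hroot i) - 1).succ = Nat.find (hroot i) := by omega
    rw [this]
    exact Nat.find_spec (hroot i)
  have := Nat.find_min' (hroot (μ i)) h2
  omega

include hs ha0 ha_edge in
lemma a_pos : ∀ i : Fin (m + 1), i ≠ 0 → 0 < a i := by
  have key : ∀ n : ℕ, ∀ i : Fin (m + 1), i ≠ 0 → Nat.find (hroot i) ≤ n → 0 < a i := by
    intro n
    induction n with
    | zero =>
      intro i hi hle
      have h0 := Nat.find_spec (hroot i)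
      rw [Nat.le_zero.mp hle] at h0
      exact absurd h0 hi
    | succ n ih =>
      intro i hi hle
      rw [ha_edge i hi]
      have hspos : 0 < s (μ i) i := hs _ _ (parent_ne' μ hμ0 hroot i hi)
      by_cases hμi : μ i = 0
      · rw [hμi] at hspos ⊢; rw [ha0]; linarith
      · have := rank_parent_lt μ hμ0 hroot i hi
        have := ih (μ i) hμi (by omega)
        linarith
  exact fun i hi => key (Nat.find (hroot i)) i hi le_rfl

include hs ha0 ha_edge in
lemma a_nonneg : ∀ i : Fin (m + 1), 0 ≤ a i := by
  intro i
  by_cases hi : i = 0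
  · rw [hi, ha0]
  · exact le_of_lt (a_pos μ hμ0 hroot s hs a ha0 ha_edge i hi)

open Classical in
include ha0 ha_edge in
lemma path_sum (j : Fin (m + 1)) :
    ∑ i ∈ univ.filter (fun i => i ≠ 0 ∧ ∃ k, μ^[k] j = i), s (μ i) i = a j := by
  have := telescope' μ hμ0 hroot j a
  rw [ha0, sub_zero] at this
  rw [← this]
  refine Finset.sum_congr rfl fun i hi => ?_
  rw [Finset.mem_filter] at hi
  rw [ha_edge i hi.2.1]; ring

open Classical in
include ha0 ha_edge in
lemma key_identity :
    ∑ i ∈ univ.filter (fun i => i ≠ 0), s (μ i) i * subtreeSum μ a i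
      = ∑ l ∈ univ.filter (fun l => l ≠ 0), a l ^ 2 := by
  have h1 : ∀ i, subtreeSum μ a i = ∑ j ∈ univ.filter (fun j => ∃ k, μ^[k] j = i), a j :=
    fun _ => rfl
  calc ∑ i ∈ univ.filter (fun i => i ≠ 0), s (μ i) i * subtreeSum μ a i
      = ∑ j, a j * ∑ i ∈ univ.filter (fun i => i ≠ 0 ∧ ∃ k, μ^[k] j = i), s (μ i) i := by
        simp_rw [h1]; exact sum_swap_anc μ (fun i => s (μ i) i) a
    _ = ∑ j, a j ^ 2 := by
        refine Finset.sum_congr rfl fun j _ => ?_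
        rw [path_sum μ hμ0 hroot s a ha0 ha_edge j, sq]
    _ = ∑ l ∈ univ.filter (fun l => l ≠ 0), a l ^ 2 := by
        rw [Finset.sum_filter]
        refine Finset.sum_congr rfl fun l _ => ?_
        by_cases hl : l = 0
        · simp [hl, ha0]
        · simp [hl]

open Classical in
include ha0 ha_edge hs in
lemma subtree_recursion {p : Fin (m + 1)} (hp : p ≠ 0) :
    subtreeSum μ a p = a p + ∑ c ∈ univ.filter (fun c => c ≠ 0 ∧ μ c = p),
      subtreeSum μ a c := by
  have h1 : subtreeSum μ a p = ∑ j, (if ∃ k, μ^[k] j = p then (1:ℝ) else 0) * a j := by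
    rw [subtreeSum, Finset.sum_filter]
    exact Finset.sum_congr rfl fun j _ => by by_cases h : ∃ k, μ^[k] j = p <;> simp [h]
  rw [h1]
  have h2 : ∀ j, (if ∃ k, μ^[k] j = p then (1:ℝ) else 0) * a j
      = (if j = p then 1 else 0) * a j
        + ∑ c ∈ univ.filter (fun c => c ≠ 0 ∧ μ c = p),
            (if ∃ k, μ^[k] j = c then (1:ℝ) else 0) * a j := by
    intro j
    rw [child_decomp μ hμ0 hroot hp j, add_mul, Finset.sum_mul]
  rw [Finset.sum_congr rfl fun j _ => h2 j, Finset.sum_add_distrib]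
  congr 1
  · simp
  · rw [Finset.sum_comm]
    refine Finset.sum_congr rfl fun c _ => ?_
    rw [subtreeSum, Finset.sum_filter]
    exact Finset.sum_congr rfl fun j _ => by by_cases h : ∃ k, μ^[k] j = c <;> simp [h]

include hs ha0 ha_edge in
lemma subtree_nonneg (i : Fin (m + 1)) : 0 ≤ subtreeSum μ a i :=
  Finset.sum_nonneg fun j _ => a_nonneg μ hμ0 hroot s hs a ha0 ha_edge j

open Classical in
include hs ha0 ha_edge in
lemma cs_bound (x : Fin (m + 1) → ℝ) (hx : x 0 = 0) :
    ∑ p, x p ^ 2 ≤ ∑ i ∈ univ.filter (fun i => i ≠ 0),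
      (x i - x (μ i)) ^ 2 / s (μ i) i * subtreeSum μ a i := by
  have perj : ∀ j, x j ^ 2 ≤ a j *
      ∑ i ∈ univ.filter (fun i => i ≠ 0 ∧ ∃ k, μ^[k] j = i),
        (x i - x (μ i)) ^ 2 / s (μ i) i := by
    intro j
    set T := univ.filter (fun i => i ≠ 0 ∧ ∃ k, μ^[k] j = i) with hT
    have hxj : x j = ∑ i ∈ T, (x i - x (μ i)) := by
      have := telescope' μ hμ0 hroot j x
      rw [hx, sub_zero] at this
      exact this.symm
    have hcs := Finset.sum_mul_sq_le_sq_mul_sq T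
      (fun i => Real.sqrt (s (μ i) i))
      (fun i => (x i - x (μ i)) / Real.sqrt (s (μ i) i))
    have hterm : ∀ i ∈ T, Real.sqrt (s (μ i) i) * ((x i - x (μ i)) / Real.sqrt (s (μ i) i))
        = x i - x (μ i) := by
      intro i hi
      rw [hT, Finset.mem_filter] at hi
      have hspos : 0 < s (μ i) i := hs _ _ (parent_ne' μ hμ0 hroot i hi.2.1)
      rw [mul_div_cancel₀ _ (by positivity)]
    have hsq1 : ∀ i ∈ T, Real.sqrt (s (μ i) i) ^ 2 = s (μ i) i := by
      intro i hi
      rw [hT, Finset.mem_filter] at hi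
      have hspos : 0 < s (μ i) i := hs _ _ (parent_ne' μ hμ0 hroot i hi.2.1)
      exact Real.sq_sqrt (le_of_lt hspos)
    have hsq2 : ∀ i ∈ T, ((x i - x (μ i)) / Real.sqrt (s (μ i) i)) ^ 2
        = (x i - x (μ i)) ^ 2 / s (μ i) i := by
      intro i hi
      rw [div_pow, hsq1 i hi]
    rw [Finset.sum_congr rfl hterm, Finset.sum_congr rfl hsq1,
      Finset.sum_congr rfl hsq2] at hcs
    rw [hxj]
    calc (∑ i ∈ T, (x i - x (μ i))) ^ 2
        ≤ (∑ i ∈ T, s (μ i) i) * ∑ i ∈ T, (x i - x (μ i)) ^ 2 / s (μ i) i := hcs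
      _ = a j * ∑ i ∈ T, (x i - x (μ i)) ^ 2 / s (μ i) i := by
          rw [path_sum μ hμ0 hroot s a ha0 ha_edge j]
  calc ∑ p, x p ^ 2
      ≤ ∑ j, a j * ∑ i ∈ univ.filter (fun i => i ≠ 0 ∧ ∃ k, μ^[k] j = i),
          (x i - x (μ i)) ^ 2 / s (μ i) i :=
        Finset.sum_le_sum fun j _ => perj j
    _ = ∑ i ∈ univ.filter (fun i => i ≠ 0),
          (x i - x (μ i)) ^ 2 / s (μ i) i * subtreeSum μ a i := by
        rw [← sum_swap_anc μ (fun i => (x i - x (μ i)) ^ 2 / s (μ i) i) a]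
        rfl

end AuxLemmas

section MatLemmas
set_option linter.unusedSectionVars false
set_option linter.unnecessarySeqFocus false
set_option maxHeartbeats 1000000

variable {m : ℕ} (s n : Fin (m + 1) → Fin (m + 1) → ℝ)

lemma fisher_entry (hdiag : ∀ p, n p p = 0) (i j : Fin m) :
    fisherMat s n i j = (if i = j then ∑ k, n i.succ k / s i.succ k ^ 2 else 0)
      - n i.succ j.succ / s i.succ j.succ ^ 2 := by
  by_cases h : i = j
  · subst h
    have : (univ.filter (fun k => k ≠ i.succ)) = univ.erase i.succ := by
      rw [Finset.filter_ne']
    simp only [fisherMat, Matrix.of_apply, if_pos rfl, this]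
    rw [Finset.sum_erase univ (by rw [hdiag]; simp)]
    rw [hdiag]
    simp
  · simp only [fisherMat, Matrix.of_apply, if_neg h]
    ring

lemma fisher_isHermitian (hsymm_n : ∀ p q, n p q = n q p) (hsymm_s : ∀ p q, s p q = s q p) :
    (fisherMat s n).IsHermitian := by
  rw [Matrix.IsHermitian, Matrix.conjTranspose]
  ext i j
  simp only [Matrix.map_apply, Matrix.transpose_apply, star_trivial]
  by_cases h : i = j
  · subst h; rfl
  · simp only [fisherMat, Matrix.of_apply, if_neg h, if_neg (Ne.symm h)]
    rw [hsymm_n j.succ i.succ, hsymm_s j.succ i.succ]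

lemma fisher_mulVec (hdiag : ∀ p, n p p = 0) (x : Fin (m + 1) → ℝ) (hx : x 0 = 0) (i : Fin m) :
    (fisherMat s n *ᵥ fun j => x j.succ) i
      = ∑ q, n i.succ q / s i.succ q ^ 2 * (x i.succ - x q) := by
  rw [Matrix.mulVec, dotProduct]
  simp only [fisher_entry s n hdiag]
  calc ∑ j : Fin m, ((if i = j then ∑ k, n i.succ k / s i.succ k ^ 2 else 0)
        - n i.succ j.succ / s i.succ j.succ ^ 2) * x j.succ
      = ∑ j : Fin m, ((if i = j then (∑ k, n i.succ k / s i.succ k ^ 2) * x j.succ else 0)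
        - n i.succ j.succ / s i.succ j.succ ^ 2 * x j.succ) :=
        Finset.sum_congr rfl fun j _ => by by_cases h : i = j <;> simp [h] <;> ring
    _ = (∑ k, n i.succ k / s i.succ k ^ 2) * x i.succ
        - ∑ j : Fin m, n i.succ j.succ / s i.succ j.succ ^ 2 * x j.succ := by
        rw [Finset.sum_sub_distrib]
        congr 1
        simp
    _ = ∑ q, n i.succ q / s i.succ q ^ 2 * x i.succ
        - ∑ q, n i.succ q / s i.succ q ^ 2 * x q := by
        rw [Finset.sum_mul]
        congr 1
        rw [Fin.sum_univ_succ]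
        rw [hx]
        simp
    _ = ∑ q, n i.succ q / s i.succ q ^ 2 * (x i.succ - x q) := by
        rw [← Finset.sum_sub_distrib]
        exact Finset.sum_congr rfl fun q _ => by ring

lemma fisher_quad (hdiag : ∀ p, n p p = 0) (hsymm_n : ∀ p q, n p q = n q p)
    (hsymm_s : ∀ p q, s p q = s q p) (x : Fin (m + 1) → ℝ) (hx : x 0 = 0) :
    2 * ((fun i : Fin m => x i.succ) ⬝ᵥ fisherMat s n *ᵥ fun j => x j.succ)
      = ∑ p, ∑ q, n p q / s p q ^ 2 * (x p - x q) ^ 2 := by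
  have hdot : ((fun i : Fin m => x i.succ) ⬝ᵥ fisherMat s n *ᵥ fun j => x j.succ)
      = ∑ p, ∑ q, n p q / s p q ^ 2 * (x p * (x p - x q)) := by
    rw [dotProduct]
    calc ∑ i : Fin m, x i.succ * (fisherMat s n *ᵥ fun j => x j.succ) i
        = ∑ i : Fin m, ∑ q, n i.succ q / s i.succ q ^ 2 * (x i.succ * (x i.succ - x q)) := by
          refine Finset.sum_congr rfl fun i _ => ?_
          rw [fisher_mulVec s n hdiag x hx i, Finset.mul_sum]
          exact Finset.sum_congr rfl fun q _ => by ring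
      _ = ∑ p, ∑ q, n p q / s p q ^ 2 * (x p * (x p - x q)) := by
          rw [Fin.sum_univ_succ (f := fun p => ∑ q, n p q / s p q ^ 2 * (x p * (x p - x q)))]
          rw [hx]
          simp
  have hdot2 : ((fun i : Fin m => x i.succ) ⬝ᵥ fisherMat s n *ᵥ fun j => x j.succ)
      = ∑ p, ∑ q, n p q / s p q ^ 2 * (-(x q) * (x p - x q)) := by
    rw [hdot, Finset.sum_comm]
    refine Finset.sum_congr rfl fun p _ => Finset.sum_congr rfl fun q _ => ?_
    rw [hsymm_n q p, hsymm_s q p]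
    ring
  rw [two_mul]
  nth_rewrite 1 [hdot]
  nth_rewrite 1 [hdot2]
  rw [← Finset.sum_add_distrib]
  refine Finset.sum_congr rfl fun p _ => ?_
  rw [← Finset.sum_add_distrib]
  refine Finset.sum_congr rfl fun q _ => ?_
  ring

lemma pair_sum {k : ℕ} (n : Fin k → Fin k → ℝ) (hsym : ∀ i j, n i j = n j i)
    (hdiag : ∀ i, n i i = 0) :
    2 * ∑ i, ∑ j ∈ univ.filter (fun j => i < j), n i j = ∑ i, ∑ j, n i j := by
  have hpt : ∀ i j : Fin k, n i j
      = (if i < j then n i j else 0) + (if j < i then n i j else 0) := by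
    intro i j
    rcases lt_trichotomy i j with h | h | h
    · simp [h, not_lt.mpr (le_of_lt h)]
    · subst h; simp [hdiag, lt_irrefl]
    · simp [h, not_lt.mpr (le_of_lt h)]
  have h1 : ∑ i, ∑ j, n i j = ∑ i, ∑ j, ((if i < j then n i j else 0)
      + (if j < i then n i j else 0)) :=
    Finset.sum_congr rfl fun i _ => Finset.sum_congr rfl fun j _ => hpt i j
  have h2 : ∑ i : Fin k, ∑ j : Fin k, (if j < i then n i j else 0)
      = ∑ i : Fin k, ∑ j : Fin k, (if i < j then n i j else 0) := by
    rw [Finset.sum_comm]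
    refine Finset.sum_congr rfl fun i _ => Finset.sum_congr rfl fun j _ => ?_
    rw [hsym]
  have h3 : ∑ i : Fin k, ∑ j : Fin k, (if i < j then n i j else 0)
      = ∑ i, ∑ j ∈ univ.filter (fun j => i < j), n i j := by
    refine Finset.sum_congr rfl fun i _ => ?_
    rw [Finset.sum_filter]
  rw [h1]
  simp_rw [Finset.sum_add_distrib]
  rw [h2, h3]
  ring

end MatLemmas

section SpecLemmas
set_option linter.unusedSectionVars false
set_option maxHeartbeats 1000000

variable {k : ℕ}

lemma mem_spectrum_iff_eig (M : Matrix (Fin k) (Fin k) ℝ) (lam : ℝ) :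
    lam ∈ spectrum ℝ M ↔ ∃ v : Fin k → ℝ, v ≠ 0 ∧ M *ᵥ v = lam • v := by
  rw [spectrum.mem_iff]
  constructor
  · intro h
    have hdet : (algebraMap ℝ (Matrix (Fin k) (Fin k) ℝ) lam - M).det = 0 := by
      by_contra hd
      exact h ((Matrix.isUnit_iff_isUnit_det _).mpr (Ne.isUnit hd))
    obtain ⟨v, hv, hv0⟩ := Matrix.exists_mulVec_eq_zero_iff.mpr hdet
    refine ⟨v, hv, ?_⟩
    have := hv0
    rw [Algebra.algebraMap_eq_smul_one, Matrix.sub_mulVec, Matrix.smul_mulVec,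
      Matrix.one_mulVec, sub_eq_zero] at this
    exact this.symm
  · rintro ⟨v, hv, heq⟩
    intro hu
    have hdet : (algebraMap ℝ (Matrix (Fin k) (Fin k) ℝ) lam - M).det = 0 := by
      rw [← Matrix.exists_mulVec_eq_zero_iff]
      refine ⟨v, hv, ?_⟩
      rw [Algebra.algebraMap_eq_smul_one, Matrix.sub_mulVec, Matrix.smul_mulVec,
        Matrix.one_mulVec, heq, sub_self]
    rw [Matrix.isUnit_iff_isUnit_det, isUnit_iff_ne_zero] at hu
    exact hu hdet

lemma eig_abs_le (M : Matrix (Fin k) (Fin k) ℝ) {lam : ℝ} {v : Fin k → ℝ}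
    (hv : v ≠ 0) (heq : M *ᵥ v = lam • v) : |lam| ≤ ∑ i, ∑ j, |M i j| := by
  have hne : (univ : Finset (Fin k)).Nonempty := by
    by_contra h
    rw [Finset.not_nonempty_iff_eq_empty, ← Finset.card_eq_zero, Finset.card_univ,
      Fintype.card_fin] at h
    apply hv
    funext i
    exact absurd (i.2.trans_eq h) (by omega)
  obtain ⟨i0, -, hmax⟩ := Finset.exists_max_image univ (fun i => |v i|) hne
  have hvi0 : 0 < |v i0| := by
    obtain ⟨j, hj⟩ := Function.ne_iff.mp hv
    calc 0 < |v j| := abs_pos.mpr hj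
      _ ≤ |v i0| := hmax j (mem_univ j)
  have h1 : |lam| * |v i0| ≤ (∑ i, ∑ j, |M i j|) * |v i0| := by
    calc |lam| * |v i0| = |lam * v i0| := (abs_mul _ _).symm
      _ = |(M *ᵥ v) i0| := by rw [heq]; simp [abs_mul]
      _ = |∑ j, M i0 j * v j| := by rw [Matrix.mulVec, dotProduct]
      _ ≤ ∑ j, |M i0 j * v j| := Finset.abs_sum_le_sum_abs _ _
      _ ≤ ∑ j, |M i0 j| * |v i0| := by
          refine Finset.sum_le_sum fun j _ => ?_
          rw [abs_mul]
          exact mul_le_mul_of_nonneg_left (hmax j (mem_univ j)) (abs_nonneg _)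
      _ = (∑ j, |M i0 j|) * |v i0| := by rw [Finset.sum_mul]
      _ ≤ (∑ i, ∑ j, |M i j|) * |v i0| := by
          refine mul_le_mul_of_nonneg_right ?_ (abs_nonneg _)
          exact Finset.single_le_sum (f := fun i => ∑ j, |M i j|)
            (fun i _ => Finset.sum_nonneg fun j _ => abs_nonneg _) (mem_univ i0)
  exact le_of_mul_le_mul_right h1 hvi0

lemma rayleigh_min (hk : 0 < k) (M : Matrix (Fin k) (Fin k) ℝ) (hM : M.IsHermitian) :
    ∃ lam ∈ spectrum ℝ M, ∀ x : Fin k → ℝ, lam * (∑ i, x i ^ 2) ≤ x ⬝ᵥ M *ᵥ x := by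
  obtain ⟨i0, -, hmin⟩ := Finset.exists_min_image univ hM.eigenvalues ⟨⟨0, hk⟩, mem_univ _⟩
  refine ⟨hM.eigenvalues i0, hM.eigenvalues_mem_spectrum_real i0, ?_⟩
  intro x
  set c := hM.eigenvalues i0 with hc
  have hU := (Matrix.mem_unitaryGroup_iff).mp (hM.eigenvectorUnitary).2
  have hpsd : (M - c • 1).PosSemidef := by
    have hdiag : Matrix.PosSemidef
        (Matrix.diagonal (fun i => hM.eigenvalues i - c) : Matrix (Fin k) (Fin k) ℝ) :=
      Matrix.PosSemidef.diagonal (fun i => sub_nonneg.mpr (hmin i (mem_univ i)))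
    have h2 := hdiag.mul_mul_conjTranspose_same
      (hM.eigenvectorUnitary : Matrix (Fin k) (Fin k) ℝ)
    have h3 : (hM.eigenvectorUnitary : Matrix (Fin k) (Fin k) ℝ)
        * Matrix.diagonal (fun i => hM.eigenvalues i - c)
        * (hM.eigenvectorUnitary : Matrix (Fin k) (Fin k) ℝ)ᴴ = M - c • 1 := by
      have hd : (Matrix.diagonal (fun i => hM.eigenvalues i - c) : Matrix (Fin k) (Fin k) ℝ)
          = Matrix.diagonal hM.eigenvalues - c • 1 := by
        ext i j
        by_cases h : i = j
        · subst h
          simp [Matrix.one_apply_eq]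
        · simp [Matrix.diagonal_apply_ne _ h, Matrix.one_apply_ne h, h]
      rw [hd, Matrix.mul_sub, Matrix.sub_mul]
      congr 1
      · have hst := hM.spectral_theorem
        rw [← Matrix.star_eq_conjTranspose]
        convert hst.symm using 3
        rw [Unitary.conjStarAlgAut_apply]; rfl
      · rw [Matrix.mul_smul, Matrix.smul_mul, mul_one, ← Matrix.star_eq_conjTranspose, hU]
    rwa [h3] at h2
  have := hpsd.dotProduct_mulVec_nonneg x
  rw [Matrix.sub_mulVec, Matrix.smul_mulVec, Matrix.one_mulVec, dotProduct_sub,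
    dotProduct_smul, star_trivial] at this
  have hxx : x ⬝ᵥ x = ∑ i, x i ^ 2 := by
    rw [dotProduct]
    exact Finset.sum_congr rfl fun i _ => (sq (x i)).symm
  rw [hxx] at this
  have h4 := this
  simp only [smul_eq_mul] at h4
  linarith

lemma spectrum_inv_iff {M : Matrix (Fin k) (Fin k) ℝ} (hu : IsUnit M) {lam : ℝ}
    (hl : lam ≠ 0) : lam ∈ spectrum ℝ M ↔ lam⁻¹ ∈ spectrum ℝ M⁻¹ := by
  have h1 := spectrum.inv_mem_iff (r := Units.mk0 lam hl) (a := hu.unit)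
  have h2 : (hu.unit : Matrix (Fin k) (Fin k) ℝ) = M := hu.unit_spec
  have h3 : ((hu.unit⁻¹ : (Matrix (Fin k) (Fin k) ℝ)ˣ) : Matrix (Fin k) (Fin k) ℝ) = M⁻¹ := by
    rw [Matrix.coe_units_inv, h2]
  rw [h2, h3] at h1
  exact h1

lemma isUnit_inv_of_isUnit {M : Matrix (Fin k) (Fin k) ℝ} (hu : IsUnit M) : IsUnit M⁻¹ := by
  rw [← hu.unit_spec, ← Matrix.coe_units_inv]
  exact (hu.unit⁻¹).isUnit

lemma zero_not_in_spectrum_of_isUnit {M : Matrix (Fin k) (Fin k) ℝ} (hu : IsUnit M) :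
    (0 : ℝ) ∉ spectrum ℝ M := by rw [spectrum.zero_notMem_iff]; exact hu

end SpecLemmas

set_option maxHeartbeats 2000000 in
/-- the `E`-optimal theorem: for a difference network with positive
fluctuations `s`, the spectral norm `‖C({n_e})‖₂ = λ_max (F({n_e})⁻¹)`, minimized
over feasible allocations `n_e ≥ 0` with `Σ_e n_e = N`, attains its minimum value
`(Σ_{i=1}^m a i ²)/N` at the allocation
`n_{i,μ i} = N · s_{i,μ i} · (Σ_{j∈T_i} a j)/(Σ_i a i ²)` supported on a
shortest-path tree (parent map `μ`), where `a i` is the shortest-path distance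
from vertex `0` to `i`. -/
theorem E_optimal_tree {m : ℕ} (hm : 0 < m)
    (s : Fin (m + 1) → Fin (m + 1) → ℝ)
    (hs : ∀ i j, i ≠ j → 0 < s i j) (hs_symm : ∀ i j, s i j = s j i)
    (μ : Fin (m + 1) → Fin (m + 1)) (hμ0 : μ 0 = 0)
    (hroot : ∀ i, ∃ k, μ^[k] i = 0)
    (a : Fin (m + 1) → ℝ) (ha0 : a 0 = 0)
    (ha_edge : ∀ i, i ≠ 0 → a i = a (μ i) + s (μ i) i)
    (ha_tri : ∀ i j, i ≠ j → |a i - a j| ≤ s i j)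
    (N : ℝ) (hN : 0 < N)
    (nstar : Fin (m + 1) → Fin (m + 1) → ℝ)
    (hnstar : nstar = fun i j =>
      if i ≠ 0 ∧ μ i = j then
        N * s j i * subtreeSum μ a i / ∑ l ∈ univ.filter (fun l => l ≠ 0), a l ^ 2
      else if j ≠ 0 ∧ μ j = i then
        N * s i j * subtreeSum μ a j / ∑ l ∈ univ.filter (fun l => l ≠ 0), a l ^ 2
      else 0) :
    IsLeast
      {t : ℝ | ∃ n, Feasible N n ∧ (fisherMat s n).PosDef ∧
        t = sSup (spectrum ℝ ((fisherMat s n)⁻¹))}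
      ((∑ l ∈ univ.filter (fun l => l ≠ 0), a l ^ 2) / N) ∧
    Feasible N nstar ∧ (fisherMat s nstar).PosDef ∧
    sSup (spectrum ℝ ((fisherMat s nstar)⁻¹))
      = (∑ l ∈ univ.filter (fun l => l ≠ 0), a l ^ 2) / N := by
  classical
  have hsum_succ : ∀ f : Fin (m + 1) → ℝ,
      ∑ l ∈ univ.filter (fun l => l ≠ 0), f l = ∑ i : Fin m, f i.succ := by
    intro f
    rw [Finset.sum_filter, Fin.sum_univ_succ]
    simp [Fin.succ_ne_zero]
  set S := ∑ l ∈ univ.filter (fun l => l ≠ 0), a l ^ 2 with hSdef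
  have hapos := a_pos μ hμ0 hroot s hs a ha0 ha_edge
  have hAnn := subtree_nonneg μ hμ0 hroot s hs a ha0 ha_edge
  have hS : 0 < S := by
    rw [hSdef, hsum_succ]
    refine Finset.sum_pos' (fun i _ => sq_nonneg _) ⟨⟨0, hm⟩, mem_univ _, ?_⟩
    have := hapos (⟨0, hm⟩ : Fin m).succ (Fin.succ_ne_zero _)
    positivity
  have hSne : S ≠ 0 := ne_of_gt hS
  have hspos' : ∀ p : Fin (m + 1), p ≠ 0 → 0 < s (μ p) p := fun p hp =>
    hs _ _ (parent_ne' μ hμ0 hroot p hp)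
  have hnot_both : ∀ p q : Fin (m + 1), (p ≠ 0 ∧ μ p = q) → ¬(q ≠ 0 ∧ μ q = p) := by
    rintro p q ⟨hp0, hpq⟩ ⟨hq0, hqp⟩
    apply hp0
    refine no_cycle' μ hμ0 hroot (by norm_num : (0:ℕ) < 2) ?_
    have h2 : μ^[2] p = μ (μ p) := by
      rw [Function.iterate_succ_apply', Function.iterate_one]
    rw [h2, hpq, hqp]
  have hnsplit : ∀ p q, nstar p q
      = (if p ≠ 0 ∧ μ p = q then N * s (μ p) p * subtreeSum μ a p / S else 0)
      + (if q ≠ 0 ∧ μ q = p then N * s (μ q) q * subtreeSum μ a q / S else 0) := by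
    intro p q
    simp only [hnstar]
    by_cases h1 : p ≠ 0 ∧ μ p = q
    · rw [if_pos h1, if_pos h1, if_neg (hnot_both p q h1), add_zero, ← h1.2]
    · rw [if_neg h1, if_neg h1, zero_add]
      by_cases h2 : q ≠ 0 ∧ μ q = p
      · rw [if_pos h2, if_pos h2, ← h2.2]
      · rw [if_neg h2, if_neg h2]
  have hn_nonneg : ∀ p q, 0 ≤ nstar p q := by
    intro p q
    rw [hnsplit p q]
    have t1 : 0 ≤ (if p ≠ 0 ∧ μ p = q then N * s (μ p) p * subtreeSum μ a p / S else 0) := by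
      split_ifs with h
      · exact div_nonneg (mul_nonneg (mul_nonneg hN.le (hspos' p h.1).le) (hAnn p)) hS.le
      · exact le_refl 0
    have t2 : 0 ≤ (if q ≠ 0 ∧ μ q = p then N * s (μ q) q * subtreeSum μ a q / S else 0) := by
      split_ifs with h
      · exact div_nonneg (mul_nonneg (mul_nonneg hN.le (hspos' q h.1).le) (hAnn q)) hS.le
      · exact le_refl 0
    linarith
  have hn_symm : ∀ p q, nstar p q = nstar q p := by
    intro p q; rw [hnsplit p q, hnsplit q p, add_comm]
  have hn_diag : ∀ p, nstar p p = 0 := by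
    intro p
    rw [hnsplit p p]
    have h : ¬(p ≠ 0 ∧ μ p = p) := by
      rintro ⟨hp, hpp⟩; exact parent_ne' μ hμ0 hroot p hp hpp
    rw [if_neg h]
    norm_num
  have hrow : ∀ (C : Fin (m + 1) → ℝ) (p : Fin (m + 1)),
      (∑ q, if p ≠ 0 ∧ μ p = q then C p else 0) = if p ≠ 0 then C p else 0 := by
    intro C p
    by_cases hp : p ≠ 0
    · rw [if_pos hp]
      rw [Finset.sum_congr rfl (fun q _ => if_congr (and_iff_right hp) rfl rfl)]
      rw [Finset.sum_ite_eq univ (μ p) (fun _ => C p)]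
      simp
    · rw [if_neg hp]
      exact Finset.sum_eq_zero fun q _ => if_neg (fun hh => hp hh.1)
  have hfilter_sum : ∀ (C : Fin (m + 1) → ℝ),
      (∑ p, if p ≠ 0 then C p else 0) = ∑ p ∈ univ.filter (fun p => p ≠ 0), C p :=
    fun C => (Finset.sum_filter _ _).symm
  have hNSS : ∑ p ∈ univ.filter (fun p => p ≠ 0), N * s (μ p) p * subtreeSum μ a p / S
      = N := by
    have h1 : ∑ p ∈ univ.filter (fun p => p ≠ 0), N * s (μ p) p * subtreeSum μ a p / S
        = N / S * ∑ p ∈ univ.filter (fun p => p ≠ 0), s (μ p) p * subtreeSum μ a p := by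
      rw [Finset.mul_sum]
      exact Finset.sum_congr rfl fun p _ => by ring
    rw [h1, key_identity μ hμ0 hroot s a ha0 ha_edge, ← hSdef]
    field_simp
  have hsum_all : ∑ p, ∑ q, nstar p q = 2 * N := by
    calc ∑ p, ∑ q, nstar p q
        = ∑ p, ∑ q, ((if p ≠ 0 ∧ μ p = q then N * s (μ p) p * subtreeSum μ a p / S else 0)
          + (if q ≠ 0 ∧ μ q = p then N * s (μ q) q * subtreeSum μ a q / S else 0)) :=
          Finset.sum_congr rfl fun p _ => Finset.sum_congr rfl fun q _ => hnsplit p q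
      _ = (∑ p, ∑ q, (if p ≠ 0 ∧ μ p = q then N * s (μ p) p * subtreeSum μ a p / S else 0))
          + ∑ p, ∑ q, (if q ≠ 0 ∧ μ q = p then N * s (μ q) q * subtreeSum μ a q / S else 0) := by
          rw [← Finset.sum_add_distrib]
          exact Finset.sum_congr rfl fun p _ => Finset.sum_add_distrib
      _ = N + N := by
          congr 1
          · rw [Finset.sum_congr rfl fun p _ =>
              hrow (fun p => N * s (μ p) p * subtreeSum μ a p / S) p,
              hfilter_sum, hNSS]
          · rw [Finset.sum_comm]
            rw [Finset.sum_congr rfl fun q _ =>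
              hrow (fun q => N * s (μ q) q * subtreeSum μ a q / S) q,
              hfilter_sum, hNSS]
      _ = 2 * N := by ring
  have hfeas_star : Feasible N nstar := by
    refine ⟨hn_nonneg, hn_symm, hn_diag, ?_⟩
    have := pair_sum nstar hn_symm hn_diag
    rw [hsum_all] at this
    linarith
  -- quadratic form of nstar
  have hquadstar : ∀ x : Fin (m + 1) → ℝ, x 0 = 0 →
      ((fun i : Fin m => x i.succ) ⬝ᵥ fisherMat s nstar *ᵥ fun j => x j.succ)
        = N / S * ∑ i ∈ univ.filter (fun i => i ≠ 0),
            (x i - x (μ i)) ^ 2 / s (μ i) i * subtreeSum μ a i := by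
    intro x hx
    have h2 := fisher_quad s nstar hn_diag hn_symm hs_symm x hx
    have hpt : ∀ p q, nstar p q / s p q ^ 2 * (x p - x q) ^ 2
        = (if p ≠ 0 ∧ μ p = q then
            N / S * ((x p - x (μ p)) ^ 2 / s (μ p) p * subtreeSum μ a p) else 0)
        + (if q ≠ 0 ∧ μ q = p then
            N / S * ((x q - x (μ q)) ^ 2 / s (μ q) q * subtreeSum μ a q) else 0) := by
      intro p q
      rw [hnsplit p q]
      by_cases h1 : p ≠ 0 ∧ μ p = q
      · rw [if_pos h1, if_pos h1, if_neg (hnot_both p q h1), if_neg (hnot_both p q h1),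
          add_zero, add_zero, ← h1.2]
        have hsp := hspos' p h1.1
        rw [hs_symm p (μ p)]
        field_simp
      · rw [if_neg h1, if_neg h1, zero_add, zero_add]
        by_cases h2 : q ≠ 0 ∧ μ q = p
        · rw [if_pos h2, if_pos h2, ← h2.2]
          have hsq := hspos' q h2.1
          field_simp
          ring
        · rw [if_neg h2, if_neg h2]
          simp
    have h3 : ∑ p, ∑ q, nstar p q / s p q ^ 2 * (x p - x q) ^ 2
        = 2 * (N / S * ∑ i ∈ univ.filter (fun i => i ≠ 0),
            (x i - x (μ i)) ^ 2 / s (μ i) i * subtreeSum μ a i) := by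
      calc ∑ p, ∑ q, nstar p q / s p q ^ 2 * (x p - x q) ^ 2
          = (∑ p, ∑ q, (if p ≠ 0 ∧ μ p = q then
              N / S * ((x p - x (μ p)) ^ 2 / s (μ p) p * subtreeSum μ a p) else 0))
            + ∑ p, ∑ q, (if q ≠ 0 ∧ μ q = p then
              N / S * ((x q - x (μ q)) ^ 2 / s (μ q) q * subtreeSum μ a q) else 0) := by
            rw [Finset.sum_congr rfl fun p _ => Finset.sum_congr rfl fun q _ => hpt p q,
              ← Finset.sum_add_distrib]
            exact Finset.sum_congr rfl fun p _ => Finset.sum_add_distrib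
        _ = (∑ p ∈ univ.filter (fun p => p ≠ 0),
              N / S * ((x p - x (μ p)) ^ 2 / s (μ p) p * subtreeSum μ a p))
            + ∑ q ∈ univ.filter (fun q => q ≠ 0),
              N / S * ((x q - x (μ q)) ^ 2 / s (μ q) q * subtreeSum μ a q) := by
            congr 1
            · rw [Finset.sum_congr rfl fun p _ =>
                hrow (fun p => N / S * ((x p - x (μ p)) ^ 2 / s (μ p) p * subtreeSum μ a p)) p,
                hfilter_sum]
            · rw [Finset.sum_comm]
              rw [Finset.sum_congr rfl fun q _ =>
                hrow (fun q => N / S * ((x q - x (μ q)) ^ 2 / s (μ q) q * subtreeSum μ a q)) q,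
                hfilter_sum]
        _ = 2 * (N / S * ∑ i ∈ univ.filter (fun i => i ≠ 0),
              (x i - x (μ i)) ^ 2 / s (μ i) i * subtreeSum μ a i) := by
            rw [← two_mul]
            congr 1
            rw [Finset.mul_sum]
    rw [h3] at h2
    linarith
  have hquadv : ∀ v : Fin m → ℝ,
      N / S * (∑ i, v i ^ 2) ≤ v ⬝ᵥ fisherMat s nstar *ᵥ v := by
    intro v
    have hx0 : (Fin.cases 0 v : Fin (m + 1) → ℝ) 0 = 0 := rfl
    have h1 := hquadstar (Fin.cases 0 v) hx0
    have h2 := cs_bound μ hμ0 hroot s hs a ha0 ha_edge (Fin.cases 0 v) hx0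
    have h3 : (fun i : Fin m => (Fin.cases 0 v : Fin (m + 1) → ℝ) i.succ) = v :=
      funext fun i => by simp
    have hsum : ∑ p, (Fin.cases 0 v : Fin (m + 1) → ℝ) p ^ 2 = ∑ i, v i ^ 2 := by
      rw [Fin.sum_univ_succ]
      simp
    rw [h3] at h1
    rw [hsum] at h2
    calc N / S * (∑ i, v i ^ 2)
        ≤ N / S * ∑ i ∈ univ.filter (fun i => i ≠ 0),
            ((Fin.cases 0 v : Fin (m + 1) → ℝ) i - (Fin.cases 0 v : Fin (m + 1) → ℝ) (μ i)) ^ 2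
              / s (μ i) i * subtreeSum μ a i :=
          mul_le_mul_of_nonneg_left h2 (div_nonneg hN.le hS.le)
      _ = v ⬝ᵥ fisherMat s nstar *ᵥ v := h1.symm
  have hstar_triv : ∀ v : Fin m → ℝ, star v = v := fun v => funext fun i => by simp
  have hpdstar : (fisherMat s nstar).PosDef := by
    refine Matrix.PosDef.of_dotProduct_mulVec_pos (fisher_isHermitian s nstar hn_symm hs_symm) fun v hv => ?_
    rw [hstar_triv v]
    have hvv : 0 < ∑ i, v i ^ 2 := by
      obtain ⟨j, hj⟩ := Function.ne_iff.mp hv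
      exact Finset.sum_pos' (fun i _ => sq_nonneg _) ⟨j, mem_univ j, by simpa [sq_abs] using pow_pos (abs_pos.mpr hj) 2⟩
    have := hquadv v
    have h0 : 0 < N / S * ∑ i, v i ^ 2 := mul_pos (div_pos hN hS) hvv
    linarith
  -- the eigenvector
  have heig : fisherMat s nstar *ᵥ (fun i : Fin m => a i.succ)
      = (N / S) • (fun i : Fin m => a i.succ) := by
    funext i
    rw [show (fisherMat s nstar *ᵥ fun i : Fin m => a i.succ) i
        = (fisherMat s nstar *ᵥ fun j : Fin m => a j.succ) i from rfl,
      fisher_mulVec s nstar hn_diag a ha0 i]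
    set p := i.succ with hp
    have hp0 : p ≠ 0 := Fin.succ_ne_zero i
    have hpt2 : ∀ q, nstar p q / s p q ^ 2 * (a p - a q)
        = (if p ≠ 0 ∧ μ p = q then N / S * subtreeSum μ a p else 0)
          - (if q ≠ 0 ∧ μ q = p then N / S * subtreeSum μ a q else 0) := by
      intro q
      rw [hnsplit p q]
      by_cases h1 : p ≠ 0 ∧ μ p = q
      · rw [if_pos h1, if_pos h1, if_neg (hnot_both p q h1), if_neg (hnot_both p q h1),
          add_zero, sub_zero, ← h1.2]
        have hsp := hspos' p h1.1
        have hedge := ha_edge p h1.1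
        rw [hs_symm p (μ p), hedge]
        field_simp
        ring
      · rw [if_neg h1, if_neg h1, zero_add, zero_sub]
        by_cases h2 : q ≠ 0 ∧ μ q = p
        · rw [if_pos h2, if_pos h2, ← h2.2]
          have hsq := hspos' q h2.1
          have hedge := ha_edge q h2.1
          rw [hedge]
          field_simp
          ring
        · rw [if_neg h2, if_neg h2]
          simp
    calc ∑ q, nstar p q / s p q ^ 2 * (a p - a q)
        = (∑ q, if p ≠ 0 ∧ μ p = q then N / S * subtreeSum μ a p else 0)
          - ∑ q, (if q ≠ 0 ∧ μ q = p then N / S * subtreeSum μ a q else 0) := by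
          rw [Finset.sum_congr rfl fun q _ => hpt2 q, Finset.sum_sub_distrib]
      _ = N / S * subtreeSum μ a p
          - ∑ c ∈ univ.filter (fun c => c ≠ 0 ∧ μ c = p), N / S * subtreeSum μ a c := by
          congr 1
          · rw [hrow (fun _ => N / S * subtreeSum μ a p) p, if_pos hp0]
          · exact (Finset.sum_filter _ _).symm
      _ = N / S * (subtreeSum μ a p
          - ∑ c ∈ univ.filter (fun c => c ≠ 0 ∧ μ c = p), subtreeSum μ a c) := by
          rw [mul_sub, Finset.mul_sum]
      _ = N / S * a p := by
          rw [subtree_recursion μ hμ0 hroot s hs a ha0 ha_edge hp0]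
          ring_nf
      _ = ((N / S) • (fun i : Fin m => a i.succ)) i := by
          rw [Pi.smul_apply, smul_eq_mul, hp]
  have havne : (fun i : Fin m => a i.succ) ≠ 0 := by
    intro h
    have h1 := congrFun h ⟨0, hm⟩
    rw [Pi.zero_apply] at h1
    exact (hapos _ (Fin.succ_ne_zero (⟨0, hm⟩ : Fin m))).ne' h1
  have hu_star : IsUnit (fisherMat s nstar) := by
    rw [Matrix.isUnit_iff_isUnit_det]
    exact (Matrix.PosDef.det_pos hpdstar).ne'.isUnit
  have hcpos : 0 < N / S := div_pos hN hS
  have hmemNS : N / S ∈ spectrum ℝ (fisherMat s nstar) :=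
    (mem_spectrum_iff_eig _ _).mpr ⟨_, havne, heig⟩
  have hmemSN : S / N ∈ spectrum ℝ (fisherMat s nstar)⁻¹ := by
    have := (spectrum_inv_iff hu_star hcpos.ne').mp hmemNS
    rwa [inv_div] at this
  have hub : ∀ t ∈ spectrum ℝ (fisherMat s nstar)⁻¹, t ≤ S / N := by
    intro t ht
    have ht0 : t ≠ 0 := by
      rintro rfl
      exact zero_not_in_spectrum_of_isUnit (isUnit_inv_of_isUnit hu_star) ht
    have h2 : t⁻¹ ∈ spectrum ℝ (fisherMat s nstar) :=
      (spectrum_inv_iff hu_star (inv_ne_zero ht0)).mpr (by rwa [inv_inv])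
    obtain ⟨v, hv, hveq⟩ := (mem_spectrum_iff_eig _ _).mp h2
    have hvv : 0 < ∑ i, v i ^ 2 := by
      obtain ⟨j, hj⟩ := Function.ne_iff.mp hv
      exact Finset.sum_pos' (fun i _ => sq_nonneg _) ⟨j, mem_univ j, by simpa [sq_abs] using pow_pos (abs_pos.mpr hj) 2⟩
    have hdotv : v ⬝ᵥ fisherMat s nstar *ᵥ v = t⁻¹ * ∑ i, v i ^ 2 := by
      rw [hveq, dotProduct_smul, smul_eq_mul]
      congr 1
      rw [dotProduct]
      exact Finset.sum_congr rfl fun i _ => (sq (v i)).symm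
    have hle : N / S * (∑ i, v i ^ 2) ≤ t⁻¹ * ∑ i, v i ^ 2 := hdotv ▸ hquadv v
    have h3 : N / S ≤ t⁻¹ := by
      by_contra hcon
      push_neg at hcon
      nlinarith [hle, hvv]
    have htinvpos : 0 < t⁻¹ := lt_of_lt_of_le hcpos h3
    have htpos : 0 < t := inv_pos.mp htinvpos
    have huv : N / S * (S / N) = 1 := by field_simp
    nlinarith [mul_le_mul_of_nonneg_left h3 htpos.le, mul_inv_cancel₀ ht0]
  have hsup_star : sSup (spectrum ℝ (fisherMat s nstar)⁻¹) = S / N :=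
    IsGreatest.csSup_eq ⟨hmemSN, hub⟩
  refine ⟨⟨⟨nstar, hfeas_star, hpdstar, hsup_star.symm⟩, ?_⟩, hfeas_star, hpdstar, hsup_star⟩
  rintro t ⟨n, hfeas, hpd, rfl⟩
  have hherm' := fisher_isHermitian s n hfeas.2.1 hs_symm
  obtain ⟨lam, hlam_mem, hlam_ray⟩ := rayleigh_min hm (fisherMat s n) hherm'
  have hquada : ((fun i : Fin m => a i.succ) ⬝ᵥ fisherMat s n *ᵥ fun j => a j.succ) ≤ N := by
    have h2 := fisher_quad s n hfeas.2.2.1 hfeas.2.1 hs_symm a ha0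
    have hle : ∑ p, ∑ q, n p q / s p q ^ 2 * (a p - a q) ^ 2 ≤ ∑ p, ∑ q, n p q := by
      refine Finset.sum_le_sum fun p _ => Finset.sum_le_sum fun q _ => ?_
      by_cases hpq : p = q
      · subst hpq
        rw [hfeas.2.2.1 p]
        simp
      · have hspq := hs p q hpq
        have htri := ha_tri p q hpq
        have hsq : (a p - a q) ^ 2 ≤ s p q ^ 2 := by
          rw [← sq_abs (a p - a q)]
          exact pow_le_pow_left₀ (abs_nonneg _) htri 2
        calc n p q / s p q ^ 2 * (a p - a q) ^ 2
            ≤ n p q / s p q ^ 2 * s p q ^ 2 :=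
              mul_le_mul_of_nonneg_left hsq (div_nonneg (hfeas.1 p q) (sq_nonneg _))
          _ = n p q := div_mul_cancel₀ _ (by positivity)
    have hsum2N : ∑ p, ∑ q, n p q = 2 * N := by
      rw [← pair_sum n hfeas.2.1 hfeas.2.2.1, hfeas.2.2.2]
    linarith
  have hSa : (∑ i : Fin m, a i.succ ^ 2) = S := (hsum_succ (fun l => a l ^ 2)).symm
  have hlam_le : lam * S ≤ N := by
    have h1 := hlam_ray (fun i : Fin m => a i.succ)
    rw [hSa] at h1
    linarith
  have hlam_pos : 0 < lam := by
    obtain ⟨v, hv, hveq⟩ := (mem_spectrum_iff_eig _ _).mp hlam_mem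
    have h0 := hpd.dotProduct_mulVec_pos hv
    rw [hstar_triv v, hveq, dotProduct_smul, smul_eq_mul] at h0
    have hvv : 0 < v ⬝ᵥ v := by
      have : v ⬝ᵥ v = ∑ i, v i ^ 2 := by
        rw [dotProduct]
        exact Finset.sum_congr rfl fun i _ => (sq (v i)).symm
      rw [this]
      obtain ⟨j, hj⟩ := Function.ne_iff.mp hv
      exact Finset.sum_pos' (fun i _ => sq_nonneg _) ⟨j, mem_univ j, by simpa [sq_abs] using pow_pos (abs_pos.mpr hj) 2⟩
    rcases mul_pos_iff.mp h0 with ⟨h, -⟩ | ⟨-, h⟩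
    · exact h
    · linarith
  have hu' : IsUnit (fisherMat s n) := by
    rw [Matrix.isUnit_iff_isUnit_det]
    exact (Matrix.PosDef.det_pos hpd).ne'.isUnit
  have hinv_mem : lam⁻¹ ∈ spectrum ℝ (fisherMat s n)⁻¹ :=
    (spectrum_inv_iff hu' hlam_pos.ne').mp hlam_mem
  have hbdd : BddAbove (spectrum ℝ (fisherMat s n)⁻¹) := by
    refine ⟨∑ i, ∑ j, |(fisherMat s n)⁻¹ i j|, fun z hz => ?_⟩
    obtain ⟨v, hv, hveq⟩ := (mem_spectrum_iff_eig _ _).mp hz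
    exact le_trans (le_abs_self z) (eig_abs_le _ hv hveq)
  have hSN_le : S / N ≤ lam⁻¹ := by
    rw [div_le_iff₀ hN]
    have h1 : S ≤ lam⁻¹ * N := by
      rw [← div_eq_inv_mul]
      rw [le_div_iff₀ hlam_pos]
      linarith
    linarith
  exact le_trans hSN_le (le_csSup hbdd hinv_mem)
end

section
/- Given real numbers n_1 ≤ n_2 ≤ … ≤ n_p with integer sum N, there exists an index k such that rounding up the k smallest values and rounding down the remaining p−k values yields integers summing exactly to N; specifically k = N − Σ_j ⌈n_j⌉ + p works when each n_j is non-integral (and the claim holds with appropriate handling of integer entries). -/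
open Finset

private noncomputable def fsum {p : ℕ} (n : Fin p → ℝ) (k : ℕ) : ℤ :=
  ∑ j : Fin p, if (j : ℕ) < k then ⌈n j⌉ else ⌊n j⌋

private lemma fsum_eq {p : ℕ} (n : Fin p → ℝ) (k : ℕ) :
    (∑ j ∈ univ.filter (fun j : Fin p => (j : ℕ) < k), ⌈n j⌉)
      + (∑ j ∈ univ.filter (fun j : Fin p => ¬ (j : ℕ) < k), ⌊n j⌋) = fsum n k := by
  rw [fsum, Finset.sum_ite]

private lemma ivt (N : ℤ) : ∀ (p : ℕ) (f : ℕ → ℤ), (∀ k, f k ≤ f (k+1)) →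
    (∀ k, f (k+1) ≤ f k + 1) → f 0 ≤ N → N ≤ f p → ∃ k ≤ p, f k = N := by
  intro p
  induction p with
  | zero => exact fun f _ _ h1 h2 => ⟨0, le_refl 0, le_antisymm h1 h2⟩
  | succ p ih =>
      intro f hm hs h1 h2
      by_cases h : N ≤ f p
      · obtain ⟨k, hk, he⟩ := ih f hm hs h1 h
        exact ⟨k, hk.trans (Nat.le_succ p), he⟩
      · refine ⟨p+1, le_refl _, ?_⟩
        have := hs p; omega

private lemma card_filter_lt {p m : ℕ} (hm : m ≤ p) :
    (univ.filter (fun j : Fin p => (j : ℕ) < m)).card = m := by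
  rw [Finset.card_filter]
  rw [Fin.sum_univ_eq_sum_range (fun i => if i < m then 1 else 0)]
  rw [← Finset.sum_filter]
  have hfil : (Finset.range p).filter (· < m) = Finset.range m := by
    ext x; simp only [Finset.mem_filter, Finset.mem_range]; omega
  rw [hfil, Finset.sum_const, Finset.card_range, smul_eq_mul, mul_one]

/-- Given reals `n 0 ≤ n 1 ≤ … ≤ n (p-1)` with integer sum `N`,
there exists `k ≤ p` such that rounding up the `k` smallest values and rounding
down the remaining `p − k` values yields integers summing exactly to `N`;
moreover, when every `n j` is non-integral, `k = N − Σ_j ⌈n j⌉ + p` works. -/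
theorem rounding_to_integers {p : ℕ} (n : Fin p → ℝ)
    (hnonneg : ∀ j, 0 ≤ n j) (hmono : Monotone n) (N : ℤ)
    (hsum : ∑ j, n j = (N : ℝ)) :
    (∃ k : ℕ, k ≤ p ∧
      (∑ j ∈ univ.filter (fun j : Fin p => (j : ℕ) < k), ⌈n j⌉)
        + (∑ j ∈ univ.filter (fun j : Fin p => ¬ (j : ℕ) < k), ⌊n j⌋) = N) ∧
    ((∀ j, ¬ ∃ z : ℤ, n j = (z : ℝ)) →
      (∑ j ∈ univ.filter (fun j : Fin p => ((j : ℕ) : ℤ) < N - (∑ j, ⌈n j⌉) + p), ⌈n j⌉)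
        + (∑ j ∈ univ.filter (fun j : Fin p => ¬ ((j : ℕ) : ℤ) < N - (∑ j, ⌈n j⌉) + p), ⌊n j⌋)
        = N) := by
  have hmon : ∀ k, fsum n k ≤ fsum n (k+1) := by
    intro k
    apply Finset.sum_le_sum
    intro j _
    by_cases h : (j : ℕ) < k
    · simp [h, Nat.lt_succ_of_lt h]
    · by_cases h2 : (j : ℕ) < k + 1
      · simpa [h, h2] using Int.floor_le_ceil (n j)
      · simp [h, h2]
  have hstep : ∀ k, fsum n (k+1) ≤ fsum n k + 1 := by
    intro k
    have h1 : fsum n (k+1) ≤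
        ∑ j : Fin p, ((if (j : ℕ) < k then ⌈n j⌉ else ⌊n j⌋) +
          if (j : ℕ) = k then 1 else 0) := by
      apply Finset.sum_le_sum
      intro j _
      rcases lt_trichotomy ((j : ℕ)) k with h | h | h
      · simp [fsum, h, Nat.lt_succ_of_lt h, Nat.ne_of_lt h]
      · simpa [fsum, h] using Int.ceil_le_floor_add_one (n j)
      · have h1 : ¬ (j : ℕ) < k := by omega
        have h2 : ¬ (j : ℕ) < k + 1 := by omega
        have h3 : (j : ℕ) ≠ k := by omega
        simp [fsum, h1, h2, h3]
    have h2 : ∑ j : Fin p, ((if (j : ℕ) < k then ⌈n j⌉ else ⌊n j⌋) +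
          if (j : ℕ) = k then (1:ℤ) else 0) =
        fsum n k + ∑ j : Fin p, (if (j : ℕ) = k then (1:ℤ) else 0) := by
      rw [Finset.sum_add_distrib]; rfl
    have h3 : ∑ j : Fin p, (if (j : ℕ) = k then (1:ℤ) else 0) ≤ 1 := by
      have hcard : (univ.filter (fun j : Fin p => (j : ℕ) = k)).card ≤ 1 := by
        apply Finset.card_le_one.mpr
        intro a ha b hb
        simp only [Finset.mem_filter] at ha hb
        exact Fin.ext (ha.2.trans hb.2.symm)
      calc ∑ j : Fin p, (if (j : ℕ) = k then (1:ℤ) else 0)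
          = ((univ.filter (fun j : Fin p => (j : ℕ) = k)).card : ℤ) := by
            rw [Finset.sum_boole]
        _ ≤ 1 := by exact_mod_cast hcard
    calc fsum n (k+1) ≤ _ := h1
      _ = _ := h2
      _ ≤ fsum n k + 1 := by omega
  have hfl : fsum n 0 = ∑ j : Fin p, ⌊n j⌋ := by simp [fsum]
  have hfp : fsum n p = ∑ j : Fin p, ⌈n j⌉ := by simp [fsum, Fin.is_lt]
  have h0 : fsum n 0 ≤ N := by
    rw [hfl]
    have : ((∑ j : Fin p, ⌊n j⌋ : ℤ) : ℝ) ≤ (N : ℝ) := by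
      rw [← hsum]; push_cast
      exact Finset.sum_le_sum fun j _ => Int.floor_le (n j)
    exact_mod_cast this
  have hp : N ≤ fsum n p := by
    rw [hfp]
    have : (N : ℝ) ≤ ((∑ j : Fin p, ⌈n j⌉ : ℤ) : ℝ) := by
      rw [← hsum]; push_cast
      exact Finset.sum_le_sum fun j _ => Int.le_ceil (n j)
    exact_mod_cast this
  constructor
  · obtain ⟨k, hk, he⟩ := ivt N p (fsum n) hmon hstep h0 hp
    exact ⟨k, hk, by rw [fsum_eq]; exact he⟩
  · intro hirr
    have hcf : ∀ j, ⌈n j⌉ = ⌊n j⌋ + 1 := by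
      intro j
      have h1 := Int.ceil_le_floor_add_one (n j)
      have h2 := Int.floor_le_ceil (n j)
      rcases eq_or_lt_of_le h2 with he | hl
      · exfalso
        apply hirr j
        refine ⟨⌊n j⌋, le_antisymm ?_ (Int.floor_le _)⟩
        calc n j ≤ (⌈n j⌉ : ℝ) := Int.le_ceil _
          _ = (⌊n j⌋ : ℝ) := by exact_mod_cast congrArg Int.cast he.symm
      · omega
    set C := ∑ j : Fin p, ⌈n j⌉ with hCdef
    have hC : C = (∑ j : Fin p, ⌊n j⌋) + p := by
      rw [hCdef]
      rw [Finset.sum_congr rfl (fun j _ => hcf j), Finset.sum_add_distrib]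
      simp
    rw [hfl] at h0
    rw [hfp] at hp
    have hk0 : (0:ℤ) ≤ N - C + p := by omega
    set m := (N - C + p).toNat with hmdef
    have hm : (m : ℤ) = N - C + p := Int.toNat_of_nonneg hk0
    have hmp : m ≤ p := by omega
    have hpred : ∀ j : Fin p, (((j : ℕ) : ℤ) < N - C + p ↔ (j : ℕ) < m) := by
      intro j; omega
    simp only [hpred]
    rw [fsum_eq]
    have hfm : fsum n m = (∑ j : Fin p, ⌊n j⌋) + m := by
      rw [fsum]
      have key : ∀ j : Fin p, (if (j : ℕ) < m then ⌈n j⌉ else ⌊n j⌋)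
          = ⌊n j⌋ + (if (j : ℕ) < m then 1 else 0) := by
        intro j; by_cases h : (j : ℕ) < m <;> simp [h, hcf]
      rw [Finset.sum_congr rfl (fun j _ => key j), Finset.sum_add_distrib,
        Finset.sum_boole, card_filter_lt hmp]
    rw [hfm]
    omega
end

section
/- In the constant-relative-error difference network (s_{ij} = s_j − s_i for i < j, with 0 < s_1 ≤ … ≤ s_m), the chain allocation n_1 = λ√m·s_1, n_{i,i+1} = λ√(m−i)·(s_{i+1}−s_i), all other n_e = 0, with λ = N/(Σ_{i=1}^m (√(m+1−i) − √(m−i)) s_i), satisfies Σ_e n_e = N and yields tr(C) = N^{-1} (Σ_{i=1}^m (√(m+1−i) − √(m−i)) s_i)². -/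
open Finset Real

private lemma abel_sum (f s w : ℕ → ℝ) (hw1 : w 1 = s 1) :
    ∀ m : ℕ, 0 < m → (∀ k ∈ Finset.Icc 2 m, w k = s k - s (k - 1)) →
    ∑ k ∈ Finset.Icc 1 m, f k * w k
      = (∑ i ∈ Finset.Icc 1 m, (f i - f (i + 1)) * s i) + f (m + 1) * s m := by
  intro m
  induction m with
  | zero => intro h; exact absurd h (lt_irrefl 0)
  | succ m ih =>
    intro _ hw
    rcases Nat.eq_zero_or_pos m with hm0 | hm0
    · subst hm0; simp [hw1]; ring
    · rw [Finset.sum_Icc_succ_top (by omega), Finset.sum_Icc_succ_top (by omega),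
        ih hm0 (fun k hk => hw k (by simp [Finset.mem_Icc] at hk ⊢; omega))]
      have hwm : w (m + 1) = s (m + 1) - s m := by
        have := hw (m + 1) (by simp [Finset.mem_Icc]; omega)
        simpa using this
      rw [hwm]; ring

theorem chain_allocation_constant_relative_error {m : ℕ} (hm : 0 < m)
    (s : ℕ → ℝ) (hs_pos : ∀ i ∈ Finset.Icc 1 m, 0 < s i)
    (hs_mono : ∀ i ∈ Finset.Icc 1 m, ∀ j ∈ Finset.Icc 1 m, i ≤ j → s i ≤ s j)
    (N : ℝ) (hN : 0 < N)
    (D : ℝ) (hD : D = ∑ i ∈ Finset.Icc 1 m,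
      (sqrt ((m : ℝ) + 1 - i) - sqrt ((m : ℝ) - i)) * s i)
    (lam : ℝ) (hlam : lam = N / D)
    (w : ℕ → ℝ) (hw1 : w 1 = s 1)
    (hw : ∀ k ∈ Finset.Icc 2 m, w k = s k - s (k - 1))
    (n : ℕ → ℝ) (hn : ∀ k ∈ Finset.Icc 1 m, n k = lam * sqrt ((m : ℝ) + 1 - k) * w k) :
    (∑ k ∈ Finset.Icc 1 m, n k = N) ∧
    (∑ i ∈ Finset.Icc 1 m, ∑ k ∈ Finset.Icc 1 i, w k ^ 2 / n k = D ^ 2 / N) := by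
  have hD_pos : 0 < D := by
    rw [hD]
    apply Finset.sum_pos
    · intro i hi
      simp only [Finset.mem_Icc] at hi
      have h1 : (0 : ℝ) ≤ (m : ℝ) - i := by
        have : (i : ℝ) ≤ m := by exact_mod_cast hi.2
        linarith
      have h2 : sqrt ((m : ℝ) - i) < sqrt ((m : ℝ) + 1 - i) :=
        Real.sqrt_lt_sqrt h1 (by linarith)
      exact mul_pos (by linarith) (hs_pos i (Finset.mem_Icc.mpr hi))
    · exact ⟨1, Finset.mem_Icc.mpr ⟨le_refl 1, hm⟩⟩
  have hD_ne : D ≠ 0 := ne_of_gt hD_pos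
  have hlam_pos : 0 < lam := by rw [hlam]; positivity
  have hlam_ne : lam ≠ 0 := ne_of_gt hlam_pos
  -- key sum identity
  have hS : ∑ k ∈ Finset.Icc 1 m, sqrt ((m : ℝ) + 1 - k) * w k = D := by
    rw [hD, abel_sum (fun k => sqrt ((m : ℝ) + 1 - k)) s w hw1 m hm hw]
    have hz : sqrt ((m : ℝ) + 1 - (↑(m + 1) : ℕ)) = 0 := by
      push_cast; simp
    rw [hz, zero_mul, add_zero]
    refine Finset.sum_congr rfl (fun i _ => ?_)
    have : sqrt ((m : ℝ) + 1 - (↑(i + 1) : ℕ)) = sqrt ((m : ℝ) - i) := by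
      congr 1; push_cast; ring
    rw [this]
  have hw_nonneg : ∀ k ∈ Finset.Icc 1 m, 0 ≤ w k := by
    intro k hk
    simp only [Finset.mem_Icc] at hk
    rcases Nat.eq_or_lt_of_le hk.1 with h1 | h1
    · rw [← h1, hw1]; exact le_of_lt (hs_pos 1 (Finset.mem_Icc.mpr ⟨le_refl 1, hm⟩))
    · rw [hw k (Finset.mem_Icc.mpr ⟨h1, hk.2⟩)]
      have := hs_mono (k - 1) (Finset.mem_Icc.mpr ⟨by omega, by omega⟩)
        k (Finset.mem_Icc.mpr ⟨by omega, hk.2⟩) (by omega)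
      linarith
  have hsqrt_pos : ∀ k ∈ Finset.Icc 1 m, 0 < sqrt ((m : ℝ) + 1 - k) := by
    intro k hk
    simp only [Finset.mem_Icc] at hk
    apply Real.sqrt_pos.mpr
    have : (k : ℝ) ≤ m := by exact_mod_cast hk.2
    linarith
  constructor
  · calc ∑ k ∈ Finset.Icc 1 m, n k
        = ∑ k ∈ Finset.Icc 1 m, lam * (sqrt ((m : ℝ) + 1 - k) * w k) := by
          refine Finset.sum_congr rfl (fun k hk => ?_)
          rw [hn k hk]; ring
      _ = lam * ∑ k ∈ Finset.Icc 1 m, sqrt ((m : ℝ) + 1 - k) * w k := by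
          rw [Finset.mul_sum]
      _ = N := by rw [hS, hlam]; field_simp
  · have key : ∀ k ∈ Finset.Icc 1 m,
        w k ^ 2 / n k = w k / (lam * sqrt ((m : ℝ) + 1 - k)) := by
      intro k hk
      rw [hn k hk]
      rcases eq_or_lt_of_le (hw_nonneg k hk) with h0 | h0
      · rw [← h0]; simp
      · have hsq := hsqrt_pos k hk
        field_simp
    calc ∑ i ∈ Finset.Icc 1 m, ∑ k ∈ Finset.Icc 1 i, w k ^ 2 / n k
        = ∑ i ∈ Finset.Icc 1 m, ∑ k ∈ Finset.Icc 1 i,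
            w k / (lam * sqrt ((m : ℝ) + 1 - k)) := by
          refine Finset.sum_congr rfl (fun i hi => ?_)
          refine Finset.sum_congr rfl (fun k hk => ?_)
          simp only [Finset.mem_Icc] at hi hk
          exact key k (Finset.mem_Icc.mpr ⟨hk.1, le_trans hk.2 hi.2⟩)
      _ = ∑ k ∈ Finset.Icc 1 m, ∑ _i ∈ Finset.Icc k m,
            w k / (lam * sqrt ((m : ℝ) + 1 - k)) := by
          apply Finset.sum_comm'
          intro i k
          simp only [Finset.mem_Icc]
          omega
      _ = ∑ k ∈ Finset.Icc 1 m,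
            ((m + 1 - k : ℕ) : ℝ) * (w k / (lam * sqrt ((m : ℝ) + 1 - k))) := by
          refine Finset.sum_congr rfl (fun k _ => ?_)
          rw [Finset.sum_const, Nat.card_Icc, nsmul_eq_mul]
      _ = ∑ k ∈ Finset.Icc 1 m, (1 / lam) * (sqrt ((m : ℝ) + 1 - k) * w k) := by
          refine Finset.sum_congr rfl (fun k hk => ?_)
          simp only [Finset.mem_Icc] at hk
          have hcast : ((m + 1 - k : ℕ) : ℝ) = (m : ℝ) + 1 - k := by
            have : k ≤ m + 1 := by omega
            push_cast [Nat.cast_sub this]; ring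
          have hsq := hsqrt_pos k (Finset.mem_Icc.mpr hk)
          have hsqsq : sqrt ((m : ℝ) + 1 - k) * sqrt ((m : ℝ) + 1 - k)
              = (m : ℝ) + 1 - k := Real.mul_self_sqrt (by nlinarith [hsq.le])
          rw [hcast]
          rw [← hsqsq]
          field_simp
          rw [Real.sqrt_sq (Real.sqrt_nonneg _)]
          ring
      _ = (1 / lam) * D := by rw [← Finset.mul_sum, hS]
      _ = D ^ 2 / N := by rw [hlam]; field_simp
end
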